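/- arXiv:1112.2528 — 6 statements merged into one kernel-verified Lean document; each statement's English description precedes it below -/
import Mathlib

section
/- Let N ≥ 1 be an integer, ε := 1/N, and let φ''_F, φ''_{2F} ∈ ℝ. Set c₀ := min(φ''_F, φ''_F + 4φ''_{2F}). Then for every u ∈ U one has ⟨L^a u, u⟩ ≥ c₀ ‖Du‖²_{ℓ²_ε}. -/
open Finset

noncomputable section

/-- mesh size ε = 1/N -/
def eps (N : ℕ) : ℝ := 1 / N

/-- the periodic cell {-N+1, …, N} -/
def cell (N : ℕ) : Finset ℤ := Finset.Icc (-(N : ℤ) + 1) N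

/-- 2N-periodicity -/
def Per (N : ℕ) (u : ℤ → ℝ) : Prop := ∀ ℓ : ℤ, u (ℓ + 2 * N) = u ℓ

/-- zero mean over a period -/
def MeanZero (N : ℕ) (u : ℤ → ℝ) : Prop := ∑ ℓ ∈ cell N, u ℓ = 0

/-- first discrete derivative (Du)_ℓ = (u_ℓ - u_{ℓ-1})/ε -/
def D (N : ℕ) (u : ℤ → ℝ) (ℓ : ℤ) : ℝ := (u ℓ - u (ℓ - 1)) / eps N

/-- second discrete derivative (D²u)_ℓ = ((Du)_{ℓ+1} - (Du)_ℓ)/ε -/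
def D2 (N : ℕ) (u : ℤ → ℝ) (ℓ : ℤ) : ℝ := (D N u (ℓ + 1) - D N u ℓ) / eps N

/-- third discrete derivative (D³u)_ℓ = ((D²u)_ℓ - (D²u)_{ℓ-1})/ε -/
def D3 (N : ℕ) (u : ℤ → ℝ) (ℓ : ℤ) : ℝ := (D2 N u ℓ - D2 N u (ℓ - 1)) / eps N

/-- the ℓ²_ε inner product ⟨u,w⟩ = ε Σ u_ℓ w_ℓ -/
def ip (N : ℕ) (u w : ℤ → ℝ) : ℝ := ∑ ℓ ∈ cell N, eps N * (u ℓ * w ℓ)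

/-- the squared ℓ²_ε norm ‖u‖² = ε Σ |u_ℓ|² -/
def nsq (N : ℕ) (u : ℤ → ℝ) : ℝ := ∑ ℓ ∈ cell N, eps N * |u ℓ| ^ 2

/-- linearized atomistic operator -/
def La (N : ℕ) (cF c2F : ℝ) (v : ℤ → ℝ) (ℓ : ℤ) : ℝ :=
  cF * (-v (ℓ + 1) + 2 * v ℓ - v (ℓ - 1)) / eps N ^ 2
    + c2F * (-v (ℓ + 2) + 2 * v ℓ - v (ℓ - 2)) / eps N ^ 2

lemma cell_shift (N : ℕ) (hN : 1 ≤ N) (f : ℤ → ℝ)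
    (hf : ∀ ℓ : ℤ, f (ℓ + 2 * N) = f ℓ) :
    ∑ ℓ ∈ cell N, f (ℓ + 1) = ∑ ℓ ∈ cell N, f ℓ := by
  have hNle : (1 : ℤ) ≤ (N : ℤ) := by exact_mod_cast hN
  have h1 : ∑ ℓ ∈ cell N, f (ℓ + 1) = ∑ ℓ ∈ Finset.Icc (-(N:ℤ) + 2) (N + 1), f ℓ := by
    have hm := Finset.map_add_right_Icc (-(N:ℤ)+1) (N:ℤ) 1
    rw [show (-(N:ℤ)+1+1) = -(N:ℤ)+2 by ring] at hm
    unfold cell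
    rw [← hm, Finset.sum_map]
    rfl
  have e1 : Finset.Icc (-(N:ℤ) + 2) ((N:ℤ) + 1) = insert ((N:ℤ)+1) (Finset.Icc (-(N:ℤ)+2) N) := by
    ext x; simp [Finset.mem_insert]; omega
  have e2 : cell N = insert (-(N:ℤ)+1) (Finset.Icc (-(N:ℤ)+2) N) := by
    unfold cell; ext x; simp [Finset.mem_insert]; omega
  have hv : f ((N:ℤ)+1) = f (-(N:ℤ)+1) := by
    have := hf (-(N:ℤ)+1)
    rw [show (-(N:ℤ)+1 + 2*(N:ℤ)) = (N:ℤ)+1 by ring] at this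
    exact this
  rw [h1, e1, e2, Finset.sum_insert (by simp), Finset.sum_insert (by simp), hv]

lemma cell_shift2 (N : ℕ) (hN : 1 ≤ N) (f : ℤ → ℝ)
    (hf : ∀ ℓ : ℤ, f (ℓ + 2 * N) = f ℓ) :
    ∑ ℓ ∈ cell N, f (ℓ + 2) = ∑ ℓ ∈ cell N, f ℓ := by
  have h1 : ∑ ℓ ∈ cell N, f (ℓ + 2) = ∑ ℓ ∈ cell N, (fun m => f (m+1)) (ℓ + 1) := by
    apply Finset.sum_congr rfl; intro ℓ _; simp only []; rw [show ℓ+1+1 = ℓ+2 by ring]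
  rw [h1, cell_shift N hN (fun m => f (m+1))
    (by intro ℓ; rw [show ℓ + 2*(N:ℤ) + 1 = (ℓ+1) + 2*N by ring, hf])]
  exact cell_shift N hN f hf

/-- coercivity of the atomistic operator:
`⟨L^a u, u⟩ ≥ c₀ ‖Du‖²_{ℓ²_ε}` with `c₀ = min(φ''_F, φ''_F + 4φ''_{2F})`. -/
theorem stmt_2 (N : ℕ) (hN : 1 ≤ N) (cF c2F : ℝ) (u : ℤ → ℝ)
    (hper : Per N u) (hmean : MeanZero N u) :
    ip N (La N cF c2F u) u ≥ min cF (cF + 4 * c2F) * nsq N (D N u) := by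
  have hε : (0:ℝ) < eps N := by
    unfold eps; positivity
  set Q1 : ℝ := ∑ ℓ ∈ cell N, (u ℓ - u (ℓ-1))^2 with hQ1
  set Q2 : ℝ := ∑ ℓ ∈ cell N, (u ℓ - u (ℓ-2))^2 with hQ2
  have hper' : ∀ (k ℓ : ℤ), u (ℓ + 2*N + k) = u (ℓ + k) := by
    intro k ℓ; rw [show ℓ + 2*(N:ℤ) + k = (ℓ+k) + 2*N by ring, hper]
  -- summation by parts identities
  have A1 : ∑ ℓ ∈ cell N, ((-u (ℓ+1) + 2*u ℓ - u (ℓ-1)) * u ℓ) = Q1 := by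
    set g : ℤ → ℝ := fun ℓ => u ℓ * u (ℓ-1) - u (ℓ-1)^2 with hg
    have hgp : ∀ ℓ : ℤ, g (ℓ + 2*N) = g ℓ := by
      intro ℓ; simp only [hg]
      rw [hper, show ℓ + 2*(N:ℤ) - 1 = (ℓ-1) + 2*N by ring, hper]
    have ht : ∑ ℓ ∈ cell N, g (ℓ+1) = ∑ ℓ ∈ cell N, g ℓ := cell_shift N hN g hgp
    have hpt : ∀ ℓ : ℤ, (-u (ℓ+1) + 2*u ℓ - u (ℓ-1)) * u ℓ
        = (u ℓ - u (ℓ-1))^2 + (g ℓ - g (ℓ+1)) := by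
      intro ℓ; simp only [hg]
      rw [show ℓ+1-1 = ℓ by ring]; ring
    calc ∑ ℓ ∈ cell N, ((-u (ℓ+1) + 2*u ℓ - u (ℓ-1)) * u ℓ)
        = ∑ ℓ ∈ cell N, ((u ℓ - u (ℓ-1))^2 + (g ℓ - g (ℓ+1))) :=
          Finset.sum_congr rfl (fun ℓ _ => hpt ℓ)
      _ = Q1 + (∑ ℓ ∈ cell N, g ℓ - ∑ ℓ ∈ cell N, g (ℓ+1)) := by
          rw [Finset.sum_add_distrib, Finset.sum_sub_distrib]
      _ = Q1 := by rw [ht]; ring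
  have A2 : ∑ ℓ ∈ cell N, ((-u (ℓ+2) + 2*u ℓ - u (ℓ-2)) * u ℓ) = Q2 := by
    set g : ℤ → ℝ := fun ℓ => u ℓ * u (ℓ-2) - u (ℓ-2)^2 with hg
    have hgp : ∀ ℓ : ℤ, g (ℓ + 2*N) = g ℓ := by
      intro ℓ; simp only [hg]
      rw [hper, show ℓ + 2*(N:ℤ) - 2 = (ℓ-2) + 2*N by ring, hper]
    have ht : ∑ ℓ ∈ cell N, g (ℓ+2) = ∑ ℓ ∈ cell N, g ℓ := cell_shift2 N hN g hgp
    have hpt : ∀ ℓ : ℤ, (-u (ℓ+2) + 2*u ℓ - u (ℓ-2)) * u ℓ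
        = (u ℓ - u (ℓ-2))^2 + (g ℓ - g (ℓ+2)) := by
      intro ℓ; simp only [hg]
      rw [show ℓ+2-2 = ℓ by ring]; ring
    calc ∑ ℓ ∈ cell N, ((-u (ℓ+2) + 2*u ℓ - u (ℓ-2)) * u ℓ)
        = ∑ ℓ ∈ cell N, ((u ℓ - u (ℓ-2))^2 + (g ℓ - g (ℓ+2))) :=
          Finset.sum_congr rfl (fun ℓ _ => hpt ℓ)
      _ = Q2 + (∑ ℓ ∈ cell N, g ℓ - ∑ ℓ ∈ cell N, g (ℓ+2)) := by
          rw [Finset.sum_add_distrib, Finset.sum_sub_distrib]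
      _ = Q2 := by rw [ht]; ring
  -- ip in terms of Q1, Q2
  have hip : ip N (La N cF c2F u) u = (cF * Q1 + c2F * Q2) / eps N := by
    have hpt : ∀ ℓ : ℤ, eps N * (La N cF c2F u ℓ * u ℓ)
        = (cF * ((-u (ℓ+1) + 2*u ℓ - u (ℓ-1)) * u ℓ)
          + c2F * ((-u (ℓ+2) + 2*u ℓ - u (ℓ-2)) * u ℓ)) / eps N := by
      intro ℓ; unfold La; field_simp
    unfold ip
    rw [Finset.sum_congr rfl (fun ℓ _ => hpt ℓ), ← Finset.sum_div]
    rw [Finset.sum_add_distrib, ← Finset.mul_sum, ← Finset.mul_sum, A1, A2]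
  -- nsq in terms of Q1
  have hnsq : nsq N (D N u) = Q1 / eps N := by
    unfold nsq
    have hpt : ∀ ℓ : ℤ, eps N * |D N u ℓ| ^ 2 = (u ℓ - u (ℓ-1))^2 / eps N := by
      intro ℓ; rw [sq_abs]; unfold D; field_simp
    rw [Finset.sum_congr rfl (fun ℓ _ => hpt ℓ), ← Finset.sum_div]
  -- nonnegativity and Q2 ≤ 4 Q1
  have hQ1nn : 0 ≤ Q1 := Finset.sum_nonneg (fun ℓ _ => sq_nonneg _)
  have hQ2nn : 0 ≤ Q2 := Finset.sum_nonneg (fun ℓ _ => sq_nonneg _)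
  have hshift : ∑ ℓ ∈ cell N, (u (ℓ-1) - u (ℓ-2))^2 = Q1 := by
    have := cell_shift N hN (fun ℓ => (u (ℓ-1) - u (ℓ-2))^2)
      (by intro ℓ
          rw [show ℓ + 2*(N:ℤ) - 1 = (ℓ-1) + 2*N by ring, hper,
              show ℓ + 2*(N:ℤ) - 2 = (ℓ-2) + 2*N by ring, hper])
    rw [← this, hQ1]
    apply Finset.sum_congr rfl; intro ℓ _
    rw [show ℓ+1-1 = ℓ by ring, show ℓ+1-2 = ℓ-1 by ring]
  have hQ2le : Q2 ≤ 4 * Q1 := by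
    have hle : Q2 ≤ ∑ ℓ ∈ cell N, (2*(u ℓ - u (ℓ-1))^2 + 2*(u (ℓ-1) - u (ℓ-2))^2) := by
      apply Finset.sum_le_sum; intro ℓ _
      nlinarith [sq_nonneg (u ℓ - 2*u (ℓ-1) + u (ℓ-2))]
    calc Q2 ≤ ∑ ℓ ∈ cell N, (2*(u ℓ - u (ℓ-1))^2 + 2*(u (ℓ-1) - u (ℓ-2))^2) := hle
      _ = 2*Q1 + 2*Q1 := by
          rw [Finset.sum_add_distrib, ← Finset.mul_sum, ← Finset.mul_sum, hshift, ← hQ1]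
      _ = 4 * Q1 := by ring
  -- conclude
  rw [hip, hnsq, ← mul_div_assoc, ge_iff_le, div_le_div_iff_of_pos_right hε]
  rcases le_or_gt 0 c2F with hc | hc
  · have h1 : min cF (cF + 4*c2F) ≤ cF := min_le_left _ _
    nlinarith
  · have h1 : min cF (cF + 4*c2F) ≤ cF + 4*c2F := min_le_right _ _
    nlinarith
end
end

section
/- Let N ≥ 1 be an integer, ε := 1/N, and let φ''_F, φ''_{2F} ∈ ℝ. Then there exists a nonzero u ∈ U such that ⟨L^a u, u⟩ = φ''_F ‖Du‖²_{ℓ²_ε}; in fact any u ∈ U with (Du)_ℓ = (−1)^ℓ for all ℓ has this property. Consequently, when φ''_{2F} > 0 the coercivity constant c₀ = min(φ''_F, φ''_F + 4φ''_{2F}) = φ''_F cannot be improved. -/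
open Finset

noncomputable section

-- auxiliary lemmas

lemma zcases (ℓ : ℤ) : (-1:ℝ)^ℓ = 1 ∨ (-1:ℝ)^ℓ = -1 := by
  rcases Int.even_or_odd ℓ with h | h
  · exact Or.inl h.neg_one_zpow
  · exact Or.inr h.neg_one_zpow

lemma zsq (ℓ : ℤ) : (-1:ℝ)^ℓ * (-1:ℝ)^ℓ = 1 := by
  rcases zcases ℓ with h | h <;> rw [h] <;> norm_num

lemma zabs (ℓ : ℤ) : |(-1:ℝ)^ℓ| = 1 := by
  rcases zcases ℓ with h | h <;> rw [h] <;> norm_num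

lemma zadd1 (ℓ : ℤ) : (-1:ℝ)^(ℓ+1) = -(-1:ℝ)^ℓ := by
  rw [zpow_add₀ (by norm_num : (-1:ℝ) ≠ 0), zpow_one]; ring

lemma zsub1 (ℓ : ℤ) : (-1:ℝ)^(ℓ-1) = -(-1:ℝ)^ℓ := by
  have := zadd1 (ℓ-1); rw [sub_add_cancel] at this; linarith

lemma zneg (n : ℕ) : (-1:ℝ) ^ (-(n:ℤ)) = (-1:ℝ) ^ (n:ℤ) := by
  rw [zpow_neg]; rcases zcases (n:ℤ) with h | h <;> rw [h] <;> norm_num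

lemma sum_sub_one (a b : ℤ) (g : ℤ → ℝ) :
    ∑ ℓ ∈ Finset.Icc a b, g (ℓ - 1) = ∑ ℓ ∈ Finset.Icc (a-1) (b-1), g ℓ := by
  apply Finset.sum_nbij' (fun ℓ => ℓ - 1) (fun ℓ => ℓ + 1) <;> intros <;> simp_all <;> omega

lemma sum_split_left (a b : ℤ) (g : ℤ → ℝ) (h : a ≤ b) :
    ∑ ℓ ∈ Finset.Icc a b, g ℓ = g a + ∑ ℓ ∈ Finset.Icc (a+1) b, g ℓ := by
  rw [show Finset.Icc a b = insert a (Finset.Icc (a+1) b) by ext x; simp; omega,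
    Finset.sum_insert (by simp)]

lemma sum_split_right (a b : ℤ) (g : ℤ → ℝ) (h : a ≤ b) :
    ∑ ℓ ∈ Finset.Icc a b, g ℓ = ∑ ℓ ∈ Finset.Icc a (b-1), g ℓ + g b := by
  rw [show Finset.Icc a b = insert b (Finset.Icc a (b-1)) by ext x; simp; omega,
    Finset.sum_insert (by simp), add_comm]

lemma sum_shift_cell (N : ℕ) (hN : 1 ≤ N) (g : ℤ → ℝ) (hg : g (-(N:ℤ)) = g (N:ℤ)) :
    ∑ ℓ ∈ cell N, g (ℓ - 1) = ∑ ℓ ∈ cell N, g ℓ := by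
  have hN' : (1:ℤ) ≤ N := by exact_mod_cast hN
  rw [cell, sum_sub_one, show (-(N:ℤ)+1-1) = -(N:ℤ) by ring,
    sum_split_left (-(N:ℤ)) ((N:ℤ)-1) g (by omega),
    sum_split_right (-(N:ℤ)+1) (N:ℤ) g (by omega), hg]
  ring

lemma card_cell (N : ℕ) : (cell N).card = 2*N := by
  rw [cell, Int.card_Icc]; omega

lemma key (N : ℕ) (hN : 1 ≤ N) (cF c2F : ℝ) (u : ℤ → ℝ) (hPer : Per N u)
    (hD : ∀ ℓ : ℤ, D N u ℓ = (-1 : ℝ) ^ ℓ) :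
    ip N (La N cF c2F u) u = cF * nsq N (D N u) := by
  have hNpos : (0:ℝ) < N := by exact_mod_cast Nat.lt_of_lt_of_le Nat.zero_lt_one hN
  have hNne : (N:ℝ) ≠ 0 := ne_of_gt hNpos
  have hepos : 0 < eps N := by rw [eps]; positivity
  have hene : eps N ≠ 0 := ne_of_gt hepos
  have hstep : ∀ ℓ : ℤ, u ℓ - u (ℓ-1) = (-1:ℝ)^ℓ * eps N := by
    intro ℓ
    have h := hD ℓ
    rw [D, div_eq_iff hene] at h
    exact h
  -- pointwise value of La
  have hLa : ∀ ℓ : ℤ, La N cF c2F u ℓ = 2*cF*(-1:ℝ)^ℓ / eps N := by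
    intro ℓ
    have h0 := hstep ℓ
    have h1 := hstep (ℓ+1)
    have h2 := hstep (ℓ+2)
    have hm := hstep (ℓ-1)
    rw [add_sub_cancel_right, zadd1] at h1
    rw [show ℓ+2-1 = ℓ+1 by ring, show ℓ+2 = (ℓ+1)+1 by ring, zadd1, zadd1] at h2
    rw [zsub1] at hm
    have A : -u (ℓ+1) + 2*u ℓ - u (ℓ-1) = 2*((-1:ℝ)^ℓ * eps N) := by linarith
    have B : -u (ℓ+2) + 2*u ℓ - u (ℓ-2) = 0 := by
      rw [show (ℓ+1)+1 = ℓ+2 by ring] at h2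
      rw [show ℓ-1-1 = ℓ-2 by ring] at hm
      linarith
    rw [La, A, B]
    field_simp
    ring
  -- the key sum
  have hgN : ((-1:ℝ)^(-(N:ℤ)) * u (-(N:ℤ))) = ((-1:ℝ)^(N:ℤ) * u (N:ℤ)) := by
    have := hPer (-(N:ℤ))
    rw [show -(N:ℤ) + 2*N = (N:ℤ) by ring] at this
    rw [zneg, this]
  have hshift := sum_shift_cell N hN (fun ℓ => (-1:ℝ)^ℓ * u ℓ) hgN
  have hgstep : ∀ ℓ : ℤ, (-1:ℝ)^ℓ * u ℓ = -((-1:ℝ)^(ℓ-1) * u (ℓ-1)) + eps N := by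
    intro ℓ
    rw [zsub1]
    have h0 := hstep ℓ
    have hs := zsq ℓ
    linear_combination ((-1:ℝ)^ℓ) * h0 + eps N * hs
  have h2Ne : (2*N : ℝ) * eps N = 2 := by rw [eps]; field_simp
  have hS : ∑ ℓ ∈ cell N, (-1:ℝ)^ℓ * u ℓ = 1 := by
    have e1 : ∑ ℓ ∈ cell N, (-1:ℝ)^ℓ * u ℓ
        = ∑ ℓ ∈ cell N, (-((-1:ℝ)^(ℓ-1) * u (ℓ-1)) + eps N) :=
      Finset.sum_congr rfl fun ℓ _ => hgstep ℓ
    rw [Finset.sum_add_distrib, Finset.sum_neg_distrib, hshift, Finset.sum_const,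
      card_cell, nsmul_eq_mul] at e1
    push_cast at e1
    have : (2*N : ℝ) * eps N = 2 := h2Ne
    linarith
  -- norm of Du
  have hnsq : nsq N (D N u) = 2 := by
    have : ∀ ℓ ∈ cell N, eps N * |D N u ℓ| ^ 2 = eps N := by
      intro ℓ _
      rw [hD ℓ, zabs]; ring
    rw [nsq, Finset.sum_congr rfl this, Finset.sum_const, card_cell, nsmul_eq_mul]
    push_cast
    linarith [h2Ne]
  -- inner product
  have hip : ip N (La N cF c2F u) u = 2*cF := by
    have : ∀ ℓ ∈ cell N, eps N * (La N cF c2F u ℓ * u ℓ)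
        = 2*cF * ((-1:ℝ)^ℓ * u ℓ) := by
      intro ℓ _
      rw [hLa ℓ]
      field_simp
    rw [ip, Finset.sum_congr rfl this, ← Finset.mul_sum, hS, mul_one]
  rw [hip, hnsq]; ring


/-- sharpness of the coercivity constant: there exists a nonzero
`u ∈ U` with `⟨L^a u, u⟩ = φ''_F ‖Du‖²`, and indeed every `u ∈ U` whose discrete
derivative is `(Du)_ℓ = (−1)^ℓ` has this property. -/
theorem stmt_3 (N : ℕ) (hN : 1 ≤ N) (cF c2F : ℝ) :
    (∃ u : ℤ → ℝ, Per N u ∧ MeanZero N u ∧ u ≠ 0 ∧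
        ip N (La N cF c2F u) u = cF * nsq N (D N u)) ∧
      (∀ u : ℤ → ℝ, Per N u → MeanZero N u → (∀ ℓ : ℤ, D N u ℓ = (-1 : ℝ) ^ ℓ) →
        ip N (La N cF c2F u) u = cF * nsq N (D N u)) := by
  have hNpos : (0:ℝ) < N := by exact_mod_cast Nat.lt_of_lt_of_le Nat.zero_lt_one hN
  have hepos : 0 < eps N := by rw [eps]; positivity
  have hene : eps N ≠ 0 := ne_of_gt hepos
  constructor
  · set u0 : ℤ → ℝ := fun ℓ => eps N / 2 * (-1:ℝ)^ℓ with hu0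
    have hPer0 : Per N u0 := by
      intro ℓ
      simp only [hu0]
      congr 1
      rw [zpow_add₀ (by norm_num : (-1:ℝ) ≠ 0)]
      have h1 : (-1:ℝ)^(2*(N:ℤ)) = 1 := by
        rw [show 2*(N:ℤ) = ((2*N : ℕ) : ℤ) by push_cast; ring, zpow_natCast]
        exact (even_two_mul N).neg_one_pow
      rw [h1, mul_one]
    have hD0 : ∀ ℓ : ℤ, D N u0 ℓ = (-1:ℝ)^ℓ := by
      intro ℓ
      simp only [D, hu0]
      rw [zsub1]
      field_simp
      norm_num
    refine ⟨u0, hPer0, ?_, ?_, key N hN cF c2F u0 hPer0 hD0⟩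
    · rw [MeanZero]
      simp only [hu0]
      rw [← Finset.mul_sum]
      have hgN : ((-1:ℝ)^(-(N:ℤ))) = ((-1:ℝ)^(N:ℤ)) := zneg N
      have hshift := sum_shift_cell N hN (fun ℓ => (-1:ℝ)^ℓ) hgN
      have e1 : ∑ ℓ ∈ cell N, (-1:ℝ)^ℓ = ∑ ℓ ∈ cell N, -((-1:ℝ)^(ℓ-1)) :=
        Finset.sum_congr rfl fun ℓ _ => by rw [zsub1]; ring
      rw [Finset.sum_neg_distrib, hshift] at e1
      have h0 : ∑ ℓ ∈ cell N, (-1:ℝ)^ℓ = 0 := by linarith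
      rw [h0, mul_zero]
    · intro h
      have h0 := congrFun h 0
      simp only [hu0, Pi.zero_apply, zpow_zero, mul_one] at h0
      have : eps N = 0 := by linarith
      exact hene this
  · intro u hPer _ hD
    exact key N hN cF c2F u hPer hD
end
end

section
/- Let N ≥ 1 be an integer, ε := 1/N, and let β : ℤ → [0,1] be 2N-periodic. Let I := {ℓ ∈ {−N+1,…,N} : 0 < β_{ℓ+j} < 1 for some j ∈ {−2,−1,1,2}} and K := #I. If β attains both the value 0 and the value 1, then for each j = 1, 2, 3, max_{−N+1 ≤ ℓ ≤ N} |(D^{(j)}β)_ℓ| ≥ (Kε)^{−j}. -/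
open Finset

noncomputable section

attribute [local instance] Classical.propDecidable

/-- the interface (blending) index set -/
def interf (N : ℕ) (β : ℤ → ℝ) : Finset ℤ :=
  (cell N).filter fun ℓ =>
    ∃ j ∈ ({-2, -1, 1, 2} : Finset ℤ), 0 < β (ℓ + j) ∧ β (ℓ + j) < 1


section Stmt8Helpers

lemma eps_pos {N : ℕ} (hN : 1 ≤ N) : 0 < eps N := by
  have : (0:ℝ) < N := by exact_mod_cast Nat.lt_of_lt_of_le Nat.zero_lt_one hN
  simp only [eps]
  positivity

lemma tele (f : ℤ → ℝ) (a : ℤ) : ∀ n : ℕ,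
    ∑ i ∈ Finset.range n, (f (a + i + 1) - f (a + i)) = f (a + n) - f a := by
  intro n
  induction n with
  | zero => simp
  | succ k ih =>
      rw [Finset.sum_range_succ, ih]
      push_cast
      ring_nf

lemma pigeon (n : ℕ) (hn : 0 < n) (g : ℕ → ℝ) (c : ℝ)
    (h : c ≤ ∑ i ∈ Finset.range n, g i) : ∃ i < n, c / n ≤ g i := by
  by_contra hc
  push_neg at hc
  have hlt : ∑ i ∈ Finset.range n, g i < ∑ _i ∈ Finset.range n, (c / n) := by
    apply Finset.sum_lt_sum_of_nonempty (Finset.nonempty_range_iff.mpr hn.ne')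
    intro i hi
    exact hc i (Finset.mem_range.mp hi)
  have he : ∑ _i ∈ Finset.range n, (c / n) = c := by
    rw [Finset.sum_const, Finset.card_range, nsmul_eq_mul,
      mul_div_cancel₀ _ (by exact_mod_cast hn.ne' : (n:ℝ) ≠ 0)]
  linarith

/-- representative of `ℓ` modulo `2N` inside the cell -/
def rep (N : ℕ) (ℓ : ℤ) : ℤ := (ℓ + ((N:ℤ) - 1)) % (2 * N) - ((N:ℤ) - 1)

lemma rep_dvd (N : ℕ) (ℓ : ℤ) : (2 * (N:ℤ)) ∣ (rep N ℓ - ℓ) := by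
  refine ⟨-((ℓ + ((N:ℤ) - 1)) / (2 * N)), ?_⟩
  have h := Int.emod_def (ℓ + ((N:ℤ) - 1)) (2 * N)
  simp only [rep]
  linarith [h]

lemma rep_mem {N : ℕ} (hN : 1 ≤ N) (ℓ : ℤ) : rep N ℓ ∈ cell N := by
  have h2 : (0:ℤ) < 2 * N := by positivity
  have h1 := Int.emod_nonneg (ℓ + ((N:ℤ) - 1)) h2.ne'
  have h3 := Int.emod_lt_of_pos (ℓ + ((N:ℤ) - 1)) h2
  simp only [cell, Finset.mem_Icc, rep]
  omega

lemma per_dvd {N : ℕ} {u : ℤ → ℝ} (hu : Per N u) {m ℓ : ℤ}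
    (h : (2 * (N:ℤ)) ∣ (m - ℓ)) : u m = u ℓ := by
  obtain ⟨k, hk⟩ := h
  have hm : m = ℓ + 2 * N * k := by linarith
  subst hm
  clear hk
  induction k using Int.induction_on with
  | zero => simp
  | succ k ih =>
      have h2 := hu (ℓ + 2 * N * k)
      rw [show ℓ + 2 * (N:ℤ) * ((k:ℤ) + 1) = ℓ + 2 * N * k + 2 * N by ring, h2, ih]
  | pred k ih =>
      have h2 := hu (ℓ + 2 * N * (-(k:ℤ) - 1))
      rw [show ℓ + 2 * (N:ℤ) * (-(k:ℤ) - 1) + 2 * N = ℓ + 2 * N * (-(k:ℤ)) by ring] at h2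
      rw [show (-(k:ℤ) - 1) = -((k:ℤ) + 1) by ring] at h2
      rw [show ℓ + 2 * (N:ℤ) * (-(k:ℤ) - 1) = ℓ + 2 * N * (-((k:ℤ) + 1)) by ring]
      exact h2.symm.trans ih

lemma per_D {N : ℕ} {u : ℤ → ℝ} (hu : Per N u) : Per N (D N u) := by
  intro ℓ
  simp only [D]
  rw [hu ℓ, show ℓ + 2*(N:ℤ) - 1 = (ℓ - 1) + 2*N by ring, hu (ℓ-1)]

lemma per_D2 {N : ℕ} {u : ℤ → ℝ} (hu : Per N u) : Per N (D2 N u) := by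
  intro ℓ
  have h := per_D hu
  simp only [D2]
  rw [show ℓ + 2*(N:ℤ) + 1 = (ℓ + 1) + 2*N by ring, h (ℓ+1), h ℓ]

lemma per_D3 {N : ℕ} {u : ℤ → ℝ} (hu : Per N u) : Per N (D3 N u) := by
  intro ℓ
  have h := per_D2 hu
  simp only [D3]
  rw [h ℓ, show ℓ + 2*(N:ℤ) - 1 = (ℓ - 1) + 2*N by ring, h (ℓ-1)]

lemma le_sup_per {N : ℕ} (hN : 1 ≤ N) {u : ℤ → ℝ} (hu : Per N u)
    (hne : (cell N).Nonempty) (ℓ : ℤ) :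
    |u ℓ| ≤ (cell N).sup' hne (fun m => |u m|) := by
  have h : u (rep N ℓ) = u ℓ := per_dvd hu (rep_dvd N ℓ)
  calc |u ℓ| = |u (rep N ℓ)| := by rw [h]
    _ ≤ _ := Finset.le_sup' (fun m => |u m|) (rep_mem hN ℓ)

open Classical in
lemma exists_seg {N : ℕ} (hN : 1 ≤ N) {β : ℤ → ℝ} (hper : Per N β)
    (hrange : ∀ ℓ : ℤ, β ℓ ∈ Set.Icc (0:ℝ) 1) (h0 : ∃ ℓ, β ℓ = 0) (h1 : ∃ ℓ, β ℓ = 1) :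
    ∃ a b : ℤ, a < b ∧ b - a ≤ 2*N - 1 ∧ β a = 0 ∧ β b = 1 ∧
      ∀ m, a < m → m < b → (0 < β m ∧ β m < 1) := by
  obtain ⟨ℓ1, hℓ1⟩ := h1
  obtain ⟨ℓ0, hℓ0⟩ := h0
  have hPne : ∃ z : ℤ, z < ℓ1 ∧ β z = 0 := by
    refine ⟨ℓ0 - 2 * N * (((ℓ0 - ℓ1).natAbs : ℤ) + 1), ?_, ?_⟩
    · have h1 : (1:ℤ) ≤ N := by exact_mod_cast hN
      have h2 : ℓ0 - ℓ1 ≤ ((ℓ0 - ℓ1).natAbs : ℤ) := Int.le_natAbs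
      have h3 : (0:ℤ) ≤ ((ℓ0 - ℓ1).natAbs : ℤ) := Int.ofNat_zero_le _
      nlinarith
    · have := per_dvd hper
        (⟨-(((ℓ0 - ℓ1).natAbs : ℤ) + 1), by ring⟩ :
          (2*(N:ℤ)) ∣ (ℓ0 - 2 * N * (((ℓ0 - ℓ1).natAbs : ℤ) + 1) - ℓ0))
      rw [this]; exact hℓ0
  obtain ⟨a, ⟨haℓ1, ha0⟩, hamax⟩ :=
    Int.exists_greatest_of_bdd (P := fun z => z < ℓ1 ∧ β z = 0)
      ⟨ℓ1, fun z hz => le_of_lt hz.1⟩ hPne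
  obtain ⟨b, ⟨hab, hb1⟩, hbmin⟩ :=
    Int.exists_least_of_bdd (P := fun z => a < z ∧ β z = 1)
      ⟨a + 1, fun z hz => hz.1⟩ ⟨ℓ1, haℓ1, hℓ1⟩
  have hbℓ1 : b ≤ ℓ1 := hbmin ℓ1 ⟨haℓ1, hℓ1⟩
  have hint : ∀ m, a < m → m < b → (0 < β m ∧ β m < 1) := by
    intro m ham hmb
    have hm0 : β m ≠ 0 := by
      intro h
      exact absurd (hamax m ⟨lt_of_lt_of_le hmb hbℓ1, h⟩) (not_le.mpr ham)
    have hm1 : β m ≠ 1 := by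
      intro h
      exact absurd (hbmin m ⟨ham, h⟩) (not_le.mpr hmb)
    obtain ⟨hge, hle⟩ := hrange m
    exact ⟨lt_of_le_of_ne hge (Ne.symm hm0), lt_of_le_of_ne hle hm1⟩
  refine ⟨a, b, hab, ?_, ha0, hb1, hint⟩
  by_contra hcon
  push_neg at hcon
  have h2N : a + 2 * N ≤ b := by omega
  rcases eq_or_lt_of_le h2N with heq | hlt
  · have : β b = β a := per_dvd hper ⟨1, by omega⟩
    rw [hb1, ha0] at this; norm_num at this
  · have hβm : β (a + 2 * N) = 0 := by
      rw [per_dvd hper (⟨1, by ring⟩ : (2*(N:ℤ)) ∣ (a + 2*N - a))]; exact ha0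
    have : a + 2 * N ≤ a := hamax _ ⟨lt_of_lt_of_le hlt hbℓ1, hβm⟩
    have h1 : (1:ℤ) ≤ N := by exact_mod_cast hN
    omega

lemma card_bound {N : ℕ} (hN : 1 ≤ N) {β : ℤ → ℝ} (hper : Per N β) {a b : ℤ}
    (hab2 : a + 2 ≤ b) (hb2N : b - a ≤ 2*N - 1)
    (hint : ∀ m, a < m → m < b → (0 < β m ∧ β m < 1)) :
    b - a ≤ ((interf N β).card : ℤ) := by
  classical
  set S : Finset ℤ := insert a (Finset.Icc (a+2) b) with hS
  have hmemS : ∀ m ∈ S, a ≤ m ∧ m ≤ b := by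
    intro m hm
    rw [hS, Finset.mem_insert, Finset.mem_Icc] at hm
    omega
  have hrepβ : ∀ m j : ℤ, β (rep N m + j) = β (m + j) := by
    intro m j
    refine per_dvd hper ?_
    obtain ⟨k, hk⟩ := rep_dvd N m
    exact ⟨k, by linarith⟩
  have hmaps : ∀ m ∈ S, rep N m ∈ interf N β := by
    intro m hm
    simp only [interf, Finset.mem_filter]
    refine ⟨rep_mem hN m, ?_⟩
    rw [hS, Finset.mem_insert, Finset.mem_Icc] at hm
    rcases hm with rfl | ⟨h1, h2⟩
    · exact ⟨1, by simp, by rw [hrepβ]; exact hint (m+1) (by omega) (by omega)⟩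
    · exact ⟨-1, by simp, by rw [hrepβ]; exact hint (m + -1) (by omega) (by omega)⟩
  have hinj : Set.InjOn (rep N) S := by
    intro m hm m' hm' he
    obtain ⟨k, hk⟩ := rep_dvd N m
    obtain ⟨k', hk'⟩ := rep_dvd N m'
    have hd : m - m' = 2 * N * (k' - k) := by
      have he' : rep N m = rep N m' := he
      nlinarith [he']
    have hb1 := hmemS m hm
    have hb2 := hmemS m' hm'
    have hNpos : (1:ℤ) ≤ N := by exact_mod_cast hN
    rcases lt_trichotomy (k' - k) 0 with h | h | h
    · have h1 : k' - k ≤ -1 := by omega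
      have h2 : 2*(N:ℤ)*(k'-k) ≤ 2*(N:ℤ)*(-1) :=
        mul_le_mul_of_nonneg_left h1 (by positivity)
      linarith [hb1.1, hb1.2, hb2.1, hb2.2]
    · rw [h, mul_zero] at hd
      omega
    · have h1 : (1:ℤ) ≤ k' - k := by omega
      have h2 : 2*(N:ℤ)*1 ≤ 2*(N:ℤ)*(k'-k) :=
        mul_le_mul_of_nonneg_left h1 (by positivity)
      linarith [hb1.1, hb1.2, hb2.1, hb2.2]
  have hcard := Finset.card_le_card_of_injOn (rep N) hmaps hinj
  have hcS : (S.card : ℤ) = b - a := by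
    rw [hS, Finset.card_insert_of_notMem (by rw [Finset.mem_Icc]; omega)]
    rw [Int.card_Icc]
    push_cast
    omega
  omega

end Stmt8Helpers

/-- sharpness of the blending-function estimate: if a 2N-periodic
`β : ℤ → [0,1]` attains both the values 0 and 1, then
`max_ℓ |(D^{(j)}β)_ℓ| ≥ (Kε)^{-j}` for `j = 1,2,3`, where `K = #I`. -/
theorem stmt_8 (N : ℕ) (hN : 1 ≤ N) (β : ℤ → ℝ) (hβper : Per N β)
    (hrange : ∀ ℓ : ℤ, β ℓ ∈ Set.Icc (0 : ℝ) 1)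
    (h0 : ∃ ℓ : ℤ, β ℓ = 0) (h1 : ∃ ℓ : ℤ, β ℓ = 1)
    (hne : (cell N).Nonempty) :
    ((interf N β).card * eps N)⁻¹ ≤ (cell N).sup' hne (fun ℓ => |D N β ℓ|) ∧
      ((((interf N β).card : ℝ) * eps N) ^ 2)⁻¹
        ≤ (cell N).sup' hne (fun ℓ => |D2 N β ℓ|) ∧
      ((((interf N β).card : ℝ) * eps N) ^ 3)⁻¹
        ≤ (cell N).sup' hne (fun ℓ => |D3 N β ℓ|) := by
  have hε : 0 < eps N := eps_pos hN
  obtain ⟨a, b, hab, hb2N, ha0, hb1, hint⟩ := exists_seg hN hβper hrange h0 h1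
  set n : ℕ := (b - a).toNat with hndef
  have hn : (n:ℤ) = b - a := Int.toNat_of_nonneg (by omega)
  have hn1 : 1 ≤ n := by omega
  set r : ℝ := (n : ℝ) with hrdef
  have hr1 : (1:ℝ) ≤ r := by rw [hrdef]; exact_mod_cast hn1
  have hr0 : (0:ℝ) < r := lt_of_lt_of_le one_pos hr1
  -- Chain 1 : a point where Dβ ≥ 1/(r ε)
  have htel1 : ∑ i ∈ Finset.range n, (β (a+i+1) - β (a+i)) = 1 := by
    rw [tele β a n, show a + (n:ℤ) = b by omega, hb1, ha0]
    ring
  obtain ⟨i, hi, hi2⟩ :=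
    pigeon n (by omega) (fun i => β (a+i+1) - β (a+i)) 1 (le_of_eq htel1.symm)
  have hD1 : 1 / (r * eps N) ≤ D N β (a + i + 1) := by
    have h2 : D N β (a + (i:ℤ) + 1) = (β (a + (i:ℤ) + 1) - β (a + (i:ℤ))) / eps N := by
      rw [D, show (a + (i:ℤ) + 1) - 1 = a + (i:ℤ) by ring]
    rw [h2, show (1:ℝ)/(r * eps N) = ((1:ℝ)/r)/eps N from by rw [div_div]]
    exact (div_le_div_iff_of_pos_right hε).mpr hi2
  -- Chain 2 : a point where D²β ≥ 1/(r ε)²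
  have hDa : D N β a ≤ 0 := by
    rw [D, ha0]
    have hnum : (0:ℝ) - β (a-1) ≤ 0 := by linarith [(hrange (a-1)).1]
    exact div_nonpos_iff.mpr (Or.inr ⟨hnum, hε.le⟩)
  have htel2 : ∑ t ∈ Finset.range (i+1), (D N β (a+t+1) - D N β (a+t))
      = D N β (a + i + 1) - D N β a := by
    rw [tele (D N β) a (i+1)]
    push_cast
    ring_nf
  have hsum2 : 1 / (r * eps N) ≤
      ∑ t ∈ Finset.range (i+1), (D N β (a+t+1) - D N β (a+t)) := by
    rw [htel2]; linarith
  obtain ⟨t, ht, ht2⟩ := pigeon (i+1) (Nat.succ_pos i) _ _ hsum2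
  have hir : ((i:ℝ) + 1) ≤ r := by
    have h : i + 1 ≤ n := hi
    rw [hrdef]
    exact_mod_cast h
  have hD2m : 1 / (r^2 * eps N^2) ≤ D2 N β (a + t) := by
    have h2 : D2 N β (a + (t:ℤ)) = (D N β (a + (t:ℤ) + 1) - D N β (a + (t:ℤ))) / eps N := by
      rw [D2]
    have h3 : 1 / (r * eps N) / (((i:ℝ))+1) ≤ D N β (a+t+1) - D N β (a+t) := by
      have := ht2
      push_cast at this
      exact this
    have h4 : 1 / (r^2 * eps N) ≤ 1 / (r * eps N) / (((i:ℝ))+1) := by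
      rw [div_div]
      apply one_div_le_one_div_of_le (by positivity)
      have h5 : (r * eps N) * ((i:ℝ)+1) ≤ (r * eps N) * r :=
        mul_le_mul_of_nonneg_left hir (mul_pos hr0 hε).le
      nlinarith [h5]
    rw [h2, show (1:ℝ)/(r^2 * eps N^2) = ((1:ℝ)/(r^2 * eps N))/eps N from by ring]
    exact (div_le_div_iff_of_pos_right hε).mpr (le_trans h4 h3)
  -- Chain 3 : a point where |D³β| ≥ 1/(r ε)³
  have hD2b : D2 N β b ≤ 0 := by
    have hx : D N β (b+1) ≤ 0 := by
      rw [D, show b + 1 - 1 = b by ring, hb1]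
      have hnum : β (b+1) - 1 ≤ 0 := by linarith [(hrange (b+1)).2]
      exact div_nonpos_iff.mpr (Or.inr ⟨hnum, hε.le⟩)
    have hy : 0 ≤ D N β b := by
      rw [D, hb1]
      have hnum : (0:ℝ) ≤ 1 - β (b-1) := by linarith [(hrange (b-1)).2]
      exact div_nonneg hnum hε.le
    rw [D2]
    exact div_nonpos_iff.mpr (Or.inr ⟨by linarith, hε.le⟩)
  have hti : (t:ℤ) ≤ (i:ℤ) := by exact_mod_cast Nat.lt_succ_iff.mp ht
  have hiℤ : (i:ℤ) < (n:ℤ) := by exact_mod_cast hi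
  set m : ℤ := a + t with hmdef
  have hma : a ≤ m := by omega
  have hmb : m ≤ b - 1 := by omega
  set q : ℕ := (b - m).toNat with hqdef
  have hq : (q:ℤ) = b - m := Int.toNat_of_nonneg (by omega)
  have hq1 : 1 ≤ q := by omega
  have hqn : q ≤ n := by omega
  have htel3 : ∑ s ∈ Finset.range q, (D2 N β (m+s+1) - D2 N β (m+s))
      = D2 N β b - D2 N β m := by
    rw [tele (D2 N β) m q, show m + (q:ℤ) = b by omega]
  have hsum3 : 1/(r^2 * eps N^2) ≤
      ∑ s ∈ Finset.range q, (-(D2 N β (m+s+1) - D2 N β (m+s))) := by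
    have hneg : ∑ s ∈ Finset.range q, (-(D2 N β (m+s+1) - D2 N β (m+s)))
        = -(∑ s ∈ Finset.range q, (D2 N β (m+s+1) - D2 N β (m+s))) := by
      rw [← Finset.sum_neg_distrib]
    rw [hneg, htel3]
    have : D2 N β (a + t) = D2 N β m := by rw [hmdef]
    linarith [hD2m, hD2b]
  obtain ⟨s, hs, hs2⟩ := pigeon q (by omega) _ _ hsum3
  have hqr : ((q:ℝ)) ≤ r := by rw [hrdef]; exact_mod_cast hqn
  have hq0 : (0:ℝ) < (q:ℝ) := by exact_mod_cast hq1
  have hD3m : 1/(r^3 * eps N^3) ≤ -(D3 N β (m+s+1)) := by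
    have h2 : D3 N β (m + (s:ℤ) + 1) = (D2 N β (m+s+1) - D2 N β (m+s)) / eps N := by
      rw [D3, show m + (s:ℤ) + 1 - 1 = m + (s:ℤ) by ring]
    have h3 : 1/(r^2 * eps N^2) / (q:ℝ) ≤ -(D2 N β (m+s+1) - D2 N β (m+s)) := hs2
    have h4 : 1/(r^3 * eps N^2) ≤ 1/(r^2 * eps N^2) / (q:ℝ) := by
      rw [div_div]
      apply one_div_le_one_div_of_le (by positivity)
      have h5 : (r^2 * eps N^2) * (q:ℝ) ≤ (r^2 * eps N^2) * r :=
        mul_le_mul_of_nonneg_left hqr (by positivity)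
      nlinarith [h5]
    rw [h2,
      show -((D2 N β (m+(s:ℤ)+1) - D2 N β (m+(s:ℤ)))/eps N)
        = (-(D2 N β (m+(s:ℤ)+1) - D2 N β (m+(s:ℤ))))/eps N from by ring,
      show (1:ℝ)/(r^3 * eps N^3) = ((1:ℝ)/(r^3 * eps N^2))/eps N from by ring]
    exact (div_le_div_iff_of_pos_right hε).mpr (le_trans h4 h3)
  -- assemble
  by_cases hK : (interf N β).card = 0
  · have hc : ((interf N β).card : ℝ) = 0 := by rw [hK]; norm_num
    obtain ⟨w, hw⟩ := hne
    refine ⟨?_, ?_, ?_⟩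
    · rw [hc, zero_mul, inv_zero]
      exact le_trans (abs_nonneg (D N β w)) (Finset.le_sup' (fun ℓ => |D N β ℓ|) hw)
    · rw [hc, zero_mul]
      norm_num
      exact le_trans (abs_nonneg (D2 N β w)) (Finset.le_sup' (fun ℓ => |D2 N β ℓ|) hw)
    · rw [hc, zero_mul]
      norm_num
      exact le_trans (abs_nonneg (D3 N β w)) (Finset.le_sup' (fun ℓ => |D3 N β ℓ|) hw)
  · have hK1 : 1 ≤ (interf N β).card := Nat.one_le_iff_ne_zero.mpr hK
    have hnK : (n:ℤ) ≤ ((interf N β).card : ℤ) := by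
      by_cases hab2 : a + 2 ≤ b
      · have := card_bound hN hβper hab2 hb2N hint
        omega
      · have h1 : (1:ℤ) ≤ ((interf N β).card : ℤ) := by exact_mod_cast hK1
        omega
    have hKr : r ≤ ((interf N β).card : ℝ) := by
      rw [hrdef]
      exact_mod_cast hnK
    have hrε : 0 < r * eps N := mul_pos hr0 hε
    have hKε : r * eps N ≤ ((interf N β).card : ℝ) * eps N := mul_le_mul_of_nonneg_right hKr hε.le
    refine ⟨?_, ?_, ?_⟩
    · calc (((interf N β).card : ℝ) * eps N)⁻¹
          ≤ (r * eps N)⁻¹ := inv_anti₀ hrε hKε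
        _ = 1/(r * eps N) := (one_div _).symm
        _ ≤ D N β (a+i+1) := hD1
        _ ≤ |D N β (a+i+1)| := le_abs_self _
        _ ≤ _ := le_sup_per hN (per_D hβper) hne _
    · calc ((((interf N β).card : ℝ) * eps N)^2)⁻¹
          ≤ ((r * eps N)^2)⁻¹ :=
            inv_anti₀ (by positivity) (pow_le_pow_left₀ hrε.le hKε 2)
        _ = 1/(r^2 * eps N^2) := by ring
        _ ≤ D2 N β (a+t) := hD2m
        _ ≤ |D2 N β (a+t)| := le_abs_self _
        _ ≤ _ := le_sup_per hN (per_D2 hβper) hne _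
    · calc ((((interf N β).card : ℝ) * eps N)^3)⁻¹
          ≤ ((r * eps N)^3)⁻¹ :=
            inv_anti₀ (by positivity) (pow_le_pow_left₀ hrε.le hKε 3)
        _ = 1/(r^3 * eps N^3) := by ring
        _ ≤ -(D3 N β (m+s+1)) := hD3m
        _ ≤ |D3 N β (m+s+1)| := neg_le_abs _
        _ ≤ _ := le_sup_per hN (per_D3 hβper) hne _
end
end

section
/- Let N ≥ 1 be an integer, ε := 1/N, β : ℤ → [0,1] be 2N-periodic, I := {ℓ ∈ {−N+1,…,N} : 0 < β_{ℓ+j} < 1 for some j ∈ {−2,−1,1,2}}, K := #I, and suppose (D^{(j)}β)_ℓ = 0 for all ℓ ∉ I and j = 1,2,3, and that ‖D^{(j)}β‖_{ℓ∞} ≤ C_β (Kε)^{−j} for j = 1, 2, 3 for some constant C_β. Suppose there is n ≥ 1 with J := {1,…,n} ⊂ I, β_1 = 0, β_n = 1, and 0 ∉ I, n+1 ∉ I. Then the number of indices ℓ ∈ J with (D³β)_ℓ ≤ −(1/2)(εK)^{−3} is at least K/(2C_β). -/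
open Finset

noncomputable section

attribute [local instance] Classical.propDecidable

private lemma mem_filter_fst {α : Type*} {p : α → Prop} {inst : DecidablePred p}
    {s : Finset α} {a : α} (h : a ∈ @Finset.filter α p inst s) : a ∈ s := by
  classical
  rw [Finset.filter_congr_decidable] at h
  exact Finset.mem_of_mem_filter a h

private lemma tele_aux (f : ℤ → ℝ) (a : ℤ) : ∀ b : ℤ, a ≤ b →
    ∑ ℓ ∈ Finset.Icc (a + 1) b, (f ℓ - f (ℓ - 1)) = f b - f a := by
  refine Int.le_induction ?_ ?_
  · rw [Finset.Icc_eq_empty (by omega)]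
    simp
  · intro b hb ih
    have hins : Finset.Icc (a + 1) (b + 1) = insert (b + 1) (Finset.Icc (a + 1) b) := by
      ext x
      simp only [Finset.mem_Icc, Finset.mem_insert]
      omega
    rw [hins, Finset.sum_insert (by simp [Finset.mem_Icc]), ih]
    have h1 : b + 1 - 1 = b := by ring
    rw [h1]
    ring

set_option maxHeartbeats 2000000 in
/-- a quasi-optimal blending function has many indices in the
transition interval with a large negative third derivative: the number of
`ℓ ∈ J = {1,…,n}` with `(D³β)_ℓ ≤ −(1/2)(εK)^{−3}` is at least `K/(2C_β)`. -/
theorem stmt_9 (N : ℕ) (hN : 1 ≤ N) (Cβ : ℝ) (hCβ : 0 < Cβ)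
    (β : ℤ → ℝ) (hβper : Per N β)
    (hrange : ∀ ℓ : ℤ, β ℓ ∈ Set.Icc (0 : ℝ) 1)
    (hsupp : ∀ ℓ ∈ cell N, ℓ ∉ interf N β →
      D N β ℓ = 0 ∧ D2 N β ℓ = 0 ∧ D3 N β ℓ = 0)
    (hne : (cell N).Nonempty)
    (hb1 : (cell N).sup' hne (fun ℓ => |D N β ℓ|)
            ≤ Cβ * (((interf N β).card : ℝ) * eps N)⁻¹)
    (hb2 : (cell N).sup' hne (fun ℓ => |D2 N β ℓ|)
            ≤ Cβ * ((((interf N β).card : ℝ) * eps N) ^ 2)⁻¹)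
    (hb3 : (cell N).sup' hne (fun ℓ => |D3 N β ℓ|)
            ≤ Cβ * ((((interf N β).card : ℝ) * eps N) ^ 3)⁻¹)
    (n : ℤ) (hn : 1 ≤ n)
    (hJ : Finset.Icc (1 : ℤ) n ⊆ interf N β)
    (hβ1 : β 1 = 0) (hβn : β n = 1)
    (h0 : (0 : ℤ) ∉ interf N β) (hn1 : n + 1 ∉ interf N β) :
    (((Finset.Icc (1 : ℤ) n).filter fun ℓ =>
        D3 N β ℓ ≤ -(1 / 2) * ((eps N * ((interf N β).card : ℝ)) ^ 3)⁻¹).card : ℝ)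
      ≥ ((interf N β).card : ℝ) / (2 * Cβ) := by
  obtain ⟨K, hK⟩ : ∃ x : ℝ, x = ((interf N β).card : ℝ) := ⟨_, rfl⟩
  obtain ⟨ε, hεdef⟩ : ∃ x : ℝ, x = eps N := ⟨_, rfl⟩
  rw [← hK, ← hεdef] at hb3 ⊢
  have hN0 : (0 : ℝ) < N := by exact_mod_cast hN
  have hε : 0 < ε := by rw [hεdef]; unfold eps; positivity
  have hIc : interf N β ⊆ cell N := fun x hx => mem_filter_fst hx
  -- n ≥ 2
  have hn2 : 2 ≤ n := by
    by_contra h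
    have hn1' : n = 1 := by omega
    rw [hn1', hβ1] at hβn
    norm_num at hβn
  -- n ≤ K
  have hnK : (n : ℝ) ≤ K := by
    have h1 : (Finset.Icc (1 : ℤ) n).card ≤ (interf N β).card := Finset.card_le_card hJ
    have h2 : ((Finset.Icc (1 : ℤ) n).card : ℝ) = (n : ℝ) := by
      rw [Int.card_Icc, show (n + 1 - 1 : ℤ) = n by ring]
      rw [show ((n.toNat : ℕ) : ℝ) = ((n.toNat : ℤ) : ℝ) by push_cast; ring,
        Int.toNat_of_nonneg (by omega)]
    calc (n : ℝ) = _ := h2.symm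
      _ ≤ K := by rw [hK]; exact_mod_cast h1
  have hK2 : (2 : ℝ) ≤ K := le_trans (by exact_mod_cast hn2) hnK
  have hK0 : (0 : ℝ) < K := by linarith
  -- total variation = 1
  have S1 : ∑ ℓ ∈ Finset.Icc (2 : ℤ) n, (β ℓ - β (ℓ - 1)) = 1 := by
    have h := tele_aux β 1 n (by omega)
    rw [show (1 : ℤ) + 1 = 2 by norm_num] at h
    rw [h, hβ1, hβn]
    ring
  -- a step of size ≥ 1/(n-1)
  have hn1R : (0 : ℝ) < (n : ℝ) - 1 := by
    have : (2 : ℝ) ≤ (n : ℝ) := by exact_mod_cast hn2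
    linarith
  obtain ⟨m, hm, hmstep⟩ : ∃ m ∈ Finset.Icc (2 : ℤ) n,
      (1 : ℝ) / ((n : ℝ) - 1) ≤ β m - β (m - 1) := by
    apply Finset.exists_le_of_sum_le ⟨2, Finset.mem_Icc.mpr ⟨le_refl 2, hn2⟩⟩
    rw [S1, Finset.sum_const, nsmul_eq_mul]
    have hc : ((Finset.Icc (2 : ℤ) n).card : ℝ) = (n : ℝ) - 1 := by
      rw [Int.card_Icc, show (n + 1 - 2 : ℤ) = n - 1 by ring]
      rw [show (((n - 1).toNat : ℕ) : ℝ) = (((n - 1).toNat : ℤ) : ℝ) by push_cast; ring,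
        Int.toNat_of_nonneg (by omega)]
      push_cast; ring
    rw [hc, mul_one_div, div_self (ne_of_gt hn1R)]
  have hm2 : 2 ≤ m := (Finset.mem_Icc.mp hm).1
  have hmn : m ≤ n := (Finset.mem_Icc.mp hm).2
  -- D β m ≥ (Kε)⁻¹
  have hDm : (K * ε)⁻¹ ≤ D N β m := by
    have h1 : (1 : ℝ) / K ≤ (1 : ℝ) / ((n : ℝ) - 1) := by
      apply one_div_le_one_div_of_le hn1R
      linarith
    have h2 : (1 : ℝ) / K ≤ β m - β (m - 1) := le_trans h1 hmstep
    show (K * ε)⁻¹ ≤ (β m - β (m - 1)) / eps N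
    rw [show (K * ε)⁻¹ = (1 / K) / ε by field_simp, ← hεdef]
    gcongr
  -- D β 1 ≤ 0 and D β (n+1) ≤ 0
  have hD1 : D N β 1 ≤ 0 := by
    show (β 1 - β (1 - 1)) / eps N ≤ 0
    apply div_nonpos_of_nonpos_of_nonneg _ (by rw [← hεdef]; exact le_of_lt hε)
    have h1 := (hrange (1 - 1)).1
    rw [hβ1]
    linarith
  have hDn1 : D N β (n + 1) ≤ 0 := by
    show (β (n + 1) - β (n + 1 - 1)) / eps N ≤ 0
    apply div_nonpos_of_nonpos_of_nonneg _ (by rw [← hεdef]; exact le_of_lt hε)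
    have h1 := (hrange (n + 1)).2
    rw [show n + 1 - 1 = n by ring, hβn]
    linarith
  -- left telescope
  have SL : (K * ε)⁻¹ ≤ ∑ ℓ ∈ Finset.Icc (1 : ℤ) (m - 1), (D N β (ℓ + 1) - D N β ℓ) := by
    have h := tele_aux (fun ℓ => D N β (ℓ + 1)) 0 (m - 1) (by omega)
    simp only [zero_add, sub_add_cancel] at h
    rw [h]
    linarith
  -- find l₁ with big positive D2
  obtain ⟨l₁, hl₁, hl₁big⟩ : ∃ l₁ ∈ Finset.Icc (1 : ℤ) (m - 1),
      ε * ((K * ε) ^ 2)⁻¹ ≤ D N β (l₁ + 1) - D N β l₁ := by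
    apply Finset.exists_le_of_sum_le ⟨1, Finset.mem_Icc.mpr ⟨le_refl 1, by omega⟩⟩
    rw [Finset.sum_const, nsmul_eq_mul]
    have hc : ((Finset.Icc (1 : ℤ) (m - 1)).card : ℝ) = (m : ℝ) - 1 := by
      rw [Int.card_Icc, show (m - 1 + 1 - 1 : ℤ) = m - 1 by ring]
      rw [show (((m - 1).toNat : ℕ) : ℝ) = (((m - 1).toNat : ℤ) : ℝ) by push_cast; ring,
        Int.toNat_of_nonneg (by omega)]
      push_cast; ring
    rw [hc]
    have hmK : (m : ℝ) - 1 ≤ K := by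
      have : (m : ℝ) ≤ (n : ℝ) := by exact_mod_cast hmn
      linarith
    have key : ((m : ℝ) - 1) * (ε * ((K * ε) ^ 2)⁻¹) ≤ (K * ε)⁻¹ := by
      rw [show (K * ε)⁻¹ = K * (ε * ((K * ε) ^ 2)⁻¹) by field_simp]
      exact mul_le_mul_of_nonneg_right hmK (by positivity)
    linarith
  have hD2L : ((K * ε) ^ 2)⁻¹ ≤ D2 N β l₁ := by
    show ((K * ε) ^ 2)⁻¹ ≤ (D N β (l₁ + 1) - D N β l₁) / eps N
    rw [← hεdef, le_div_iff₀ hε]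
    linarith [hl₁big]
  -- right telescope
  have SR : ∑ ℓ ∈ Finset.Icc m n, (D N β (ℓ + 1) - D N β ℓ) ≤ -(K * ε)⁻¹ := by
    have h := tele_aux (fun ℓ => D N β (ℓ + 1)) (m - 1) n (by omega)
    simp only [sub_add_cancel] at h
    rw [h]
    linarith
  -- find l₂ with big negative D2
  obtain ⟨l₂, hl₂, hl₂big⟩ : ∃ l₂ ∈ Finset.Icc m n,
      D N β (l₂ + 1) - D N β l₂ ≤ -(ε * ((K * ε) ^ 2)⁻¹) := by
    apply Finset.exists_le_of_sum_le ⟨m, Finset.mem_Icc.mpr ⟨le_refl m, hmn⟩⟩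
    rw [Finset.sum_const, nsmul_eq_mul]
    have hc : ((Finset.Icc m n).card : ℝ) = (n : ℝ) - (m : ℝ) + 1 := by
      rw [Int.card_Icc]
      rw [show (((n + 1 - m).toNat : ℕ) : ℝ) = (((n + 1 - m).toNat : ℤ) : ℝ) by push_cast; ring,
        Int.toNat_of_nonneg (by omega)]
      push_cast; ring
    rw [hc]
    have hmK : (n : ℝ) - (m : ℝ) + 1 ≤ K := by
      have h1 : (2 : ℝ) ≤ (m : ℝ) := by exact_mod_cast hm2
      linarith
    have key : ((n : ℝ) - (m : ℝ) + 1) * (ε * ((K * ε) ^ 2)⁻¹) ≤ (K * ε)⁻¹ := by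
      rw [show (K * ε)⁻¹ = K * (ε * ((K * ε) ^ 2)⁻¹) by field_simp]
      exact mul_le_mul_of_nonneg_right hmK (by positivity)
    have hexp : ((n : ℝ) - (m : ℝ) + 1) * -(ε * ((K * ε) ^ 2)⁻¹)
        = -(((n : ℝ) - (m : ℝ) + 1) * (ε * ((K * ε) ^ 2)⁻¹)) := by ring
    rw [hexp]
    linarith
  have hD2R : D2 N β l₂ ≤ -((K * ε) ^ 2)⁻¹ := by
    show (D N β (l₂ + 1) - D N β l₂) / eps N ≤ -((K * ε) ^ 2)⁻¹
    rw [← hεdef, div_le_iff₀ hε]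
    have : -((K * ε) ^ 2)⁻¹ * ε = -(ε * ((K * ε) ^ 2)⁻¹) := by ring
    rw [this]
    linarith [hl₂big]
  have hl₁m : l₁ ≤ m - 1 := (Finset.mem_Icc.mp hl₁).2
  have hl₁1 : 1 ≤ l₁ := (Finset.mem_Icc.mp hl₁).1
  have hl₂m : m ≤ l₂ := (Finset.mem_Icc.mp hl₂).1
  have hl₂n : l₂ ≤ n := (Finset.mem_Icc.mp hl₂).2
  -- third telescope
  obtain ⟨T, hT⟩ : ∃ t : Finset ℤ, t = Finset.Icc (l₁ + 1) l₂ := ⟨_, rfl⟩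
  have hterm : ∀ ℓ, D2 N β ℓ - D2 N β (ℓ - 1) = ε * D3 N β ℓ := by
    intro ℓ
    show D2 N β ℓ - D2 N β (ℓ - 1) = ε * ((D2 N β ℓ - D2 N β (ℓ - 1)) / eps N)
    rw [← hεdef]
    field_simp
  have S4' : ∑ ℓ ∈ T, ε * D3 N β ℓ ≤ -(2 * ((K * ε) ^ 2)⁻¹) := by
    have h := tele_aux (D2 N β) l₁ l₂ (by omega)
    simp_rw [hterm] at h
    rw [hT, h]
    linarith
  -- the bad set
  have hc3 : ((ε * K) ^ 3)⁻¹ = ((K * ε) ^ 3)⁻¹ := by rw [mul_comm]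
  have hTsub : T ⊆ Finset.Icc (1 : ℤ) n := by
    rw [hT]
    apply Finset.Icc_subset_Icc <;> omega
  have hTcell : ∀ ℓ ∈ T, ℓ ∈ cell N := fun ℓ hℓ => hIc (hJ (hTsub hℓ))
  -- uniform lower bound on D3 from hb3
  have hD3low : ∀ ℓ ∈ T, -(Cβ * ((K * ε) ^ 3)⁻¹) ≤ D3 N β ℓ := by
    intro ℓ hℓ
    have h1 : |D3 N β ℓ| ≤ (cell N).sup' hne (fun ℓ => |D3 N β ℓ|) :=
      Finset.le_sup' (f := fun ℓ => |D3 N β ℓ|) (hTcell ℓ hℓ)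
    have h2 : |D3 N β ℓ| ≤ Cβ * ((K * ε) ^ 3)⁻¹ := le_trans h1 hb3
    have h3 := neg_abs_le (D3 N β ℓ)
    linarith
  -- split the sum
  have hsplit := Finset.sum_filter_add_sum_filter_not T
    (fun ℓ => D3 N β ℓ ≤ -(1 / 2) * ((ε * K) ^ 3)⁻¹) (fun ℓ => ε * D3 N β ℓ)
  obtain ⟨M, hM⟩ : ∃ M : ℕ,
    M = (T.filter (fun ℓ => D3 N β ℓ ≤ -(1 / 2) * ((ε * K) ^ 3)⁻¹)).card := ⟨_, rfl⟩
  have hA : -((M : ℝ) * (ε * (Cβ * ((K * ε) ^ 3)⁻¹))) ≤ ∑ ℓ ∈ T.filter (fun ℓ => D3 N β ℓ ≤ -(1 / 2) * ((ε * K) ^ 3)⁻¹), ε * D3 N β ℓ := by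
    have hstep : ∀ ℓ ∈ T.filter (fun ℓ => D3 N β ℓ ≤ -(1 / 2) * ((ε * K) ^ 3)⁻¹), -(ε * (Cβ * ((K * ε) ^ 3)⁻¹)) ≤ ε * D3 N β ℓ := by
      intro ℓ hℓ
      have h1 := hD3low ℓ (Finset.filter_subset _ _ hℓ)
      nlinarith
    calc -((M : ℝ) * (ε * (Cβ * ((K * ε) ^ 3)⁻¹)))
        = ∑ _ℓ ∈ T.filter (fun ℓ => D3 N β ℓ ≤ -(1 / 2) * ((ε * K) ^ 3)⁻¹), -(ε * (Cβ * ((K * ε) ^ 3)⁻¹)) := by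
          rw [Finset.sum_const, nsmul_eq_mul, ← hM]; ring
      _ ≤ _ := Finset.sum_le_sum hstep
  have hTK : ((T.filter (fun ℓ => ¬ (D3 N β ℓ ≤ -(1 / 2) * ((ε * K) ^ 3)⁻¹))).card : ℝ) ≤ K := by
    have h1 : (T.filter (fun ℓ => ¬ (D3 N β ℓ ≤ -(1 / 2) * ((ε * K) ^ 3)⁻¹))).card ≤ T.card := Finset.card_filter_le _ _
    have h2 : (T.card : ℝ) ≤ K := by
      have hcard : T.card = (l₂ - l₁).toNat := by
        rw [hT, Int.card_Icc]
        congr 1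
        omega
      rw [hcard, show (((l₂ - l₁).toNat : ℕ) : ℝ) = (((l₂ - l₁).toNat : ℤ) : ℝ)
        by push_cast; ring, Int.toNat_of_nonneg (by omega)]
      have h3 : ((l₂ - l₁ : ℤ) : ℝ) ≤ (n : ℝ) := by
        exact_mod_cast (show (l₂ - l₁ : ℤ) ≤ n by omega)
      linarith
    calc ((T.filter (fun ℓ => ¬ (D3 N β ℓ ≤ -(1 / 2) * ((ε * K) ^ 3)⁻¹))).card : ℝ) ≤ (T.card : ℝ) := by exact_mod_cast h1
      _ ≤ K := h2
  have hB : -(K * (ε * ((1 : ℝ) / 2 * ((K * ε) ^ 3)⁻¹)))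
      ≤ ∑ ℓ ∈ T.filter (fun ℓ => ¬ (D3 N β ℓ ≤ -(1 / 2) * ((ε * K) ^ 3)⁻¹)), ε * D3 N β ℓ := by
    have hstep : ∀ ℓ ∈ T.filter (fun ℓ => ¬ (D3 N β ℓ ≤ -(1 / 2) * ((ε * K) ^ 3)⁻¹)),
        -(ε * ((1 : ℝ) / 2 * ((K * ε) ^ 3)⁻¹)) ≤ ε * D3 N β ℓ := by
      intro ℓ hℓ
      have h1 : ¬ (D3 N β ℓ ≤ -(1 / 2) * ((ε * K) ^ 3)⁻¹) := (Finset.mem_filter.mp hℓ).2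
      push_neg at h1
      rw [hc3] at h1
      nlinarith [le_of_lt h1]
    calc -(K * (ε * ((1 : ℝ) / 2 * ((K * ε) ^ 3)⁻¹)))
        ≤ -(((T.filter (fun ℓ => ¬ (D3 N β ℓ ≤ -(1 / 2) * ((ε * K) ^ 3)⁻¹))).card : ℝ) * (ε * ((1 : ℝ) / 2 * ((K * ε) ^ 3)⁻¹))) := by
          have hpos : (0 : ℝ) ≤ ε * ((1 : ℝ) / 2 * ((K * ε) ^ 3)⁻¹) := by positivity
          nlinarith
      _ = ∑ _ℓ ∈ T.filter (fun ℓ => ¬ (D3 N β ℓ ≤ -(1 / 2) * ((ε * K) ^ 3)⁻¹)), -(ε * ((1 : ℝ) / 2 * ((K * ε) ^ 3)⁻¹)) := by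
          rw [Finset.sum_const, nsmul_eq_mul]; ring
      _ ≤ _ := Finset.sum_le_sum hstep
  -- combine
  have hcomb : -((M : ℝ) * (ε * (Cβ * ((K * ε) ^ 3)⁻¹)))
      + -(K * (ε * ((1 : ℝ) / 2 * ((K * ε) ^ 3)⁻¹))) ≤ -(2 * ((K * ε) ^ 2)⁻¹) := by
    rw [← hsplit] at S4'
    linarith
  have hMCβ : (3 : ℝ) / 2 * K ≤ (M : ℝ) * Cβ := by
    have hrel : ((K * ε) ^ 2)⁻¹ = K * ε * ((K * ε) ^ 3)⁻¹ := by
      field_simp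
    rw [hrel] at hcomb
    have hεc3 : (0 : ℝ) < ε * ((K * ε) ^ 3)⁻¹ := by positivity
    have h2 : (2 * K) * (ε * ((K * ε) ^ 3)⁻¹)
        ≤ ((M : ℝ) * Cβ + K * (1 / 2)) * (ε * ((K * ε) ^ 3)⁻¹) := by nlinarith
    have h3 : (2 : ℝ) * K ≤ (M : ℝ) * Cβ + K * (1 / 2) :=
      le_of_mul_le_mul_right h2 hεc3
    linarith
  -- conclude
  have hMfinal : M ≤ ((Finset.Icc (1 : ℤ) n).filter
      (fun ℓ => D3 N β ℓ ≤ -(1 / 2) * ((ε * K) ^ 3)⁻¹)).card := by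
    rw [hM]
    exact Finset.card_le_card (Finset.filter_subset_filter _ hTsub)
  have hgoal : K / (2 * Cβ) ≤ (M : ℝ) := by
    rw [div_le_iff₀ (by positivity)]
    nlinarith
  have hMfinalR : (M : ℝ) ≤ ((((Finset.Icc (1 : ℤ) n).filter
      (fun ℓ => D3 N β ℓ ≤ -(1 / 2) * ((ε * K) ^ 3)⁻¹)).card : ℕ) : ℝ) := by
    exact_mod_cast hMfinal
  exact le_trans hgoal hMfinalR
end
end

section
/- Let N ≥ 1 be an integer, ε := 1/N, M a symmetric real 2×2 matrix, and β : 𝕃 → ℝ Ω-periodic. Define, for Ω-periodic v : 𝕃 → ℝ², the operators (L^a_{b₁} v)(x) := −M·D_{b₁}D_{b₁}v(x−b₁), (L^c_{b₁} v)(x) := −M·[D_{a₁}D_{a₁}v(x−a₁) + D_{a₂}D_{a₂}v(x−a₂) + D_{a₁}D_{a₂}v(x−a₁) + D_{a₁}D_{a₂}v(x−a₂)], and (L^{bqcf}_{b₁} v)(x) := β(x)(L^a_{b₁}v)(x) + (1−β(x))(L^c_{b₁}v)(x). Then for every u ∈ U: ⟨L^{bqcf}_{b₁} u, u⟩ = ⟨L^c_{b₁}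 u, u⟩ − ε⁴ Σ_{x∈𝓛} β(x−a₂) |D_{a₁}D_{a₂}u(x−a₁−a₂)|²_M + R_{b₁} + S_{b₁}, where R_{b₁} := −ε⁴ Σ_{x∈𝓛} { D_{a₁}β(x−2a₁) ⟨D_{a₁}u(x−2a₁), D_{a₂}D_{a₂}u(x−a₁−a₂)⟩_M + D_{a₂}β(x−a₂) ⟨D_{a₁}u(x−a₁), D_{a₁}D_{a₂}u(x−a₁−a₂)⟩_M } and S_{b₁} := −ε⁴ Σ_{x∈𝓛} D_{a₁}D_{a₁}β(x−2a₁) ⟨u(x−a₁), D_{a₂}D_{a₂}u(x−a₁−a₂)⟩_M. -/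
open Finset

noncomputable section

attribute [local instance] Classical.propDecidable

/-- lattice vectors (as elements of ℝ², realized as `Fin 2 → ℝ`):
`a₁ = ε(1,0)`, `a₂ = ε(1/2,√3/2)`, `a₃ = ε(−1/2,√3/2)`, `a₄ = −a₁`, `a₅ = −a₂`, `a₆ = −a₃`. -/
def avec (N : ℕ) : Fin 6 → (Fin 2 → ℝ) :=
  ![![eps N, 0],
    ![eps N / 2, eps N * Real.sqrt 3 / 2],
    ![-(eps N) / 2, eps N * Real.sqrt 3 / 2],
    ![-(eps N), 0],
    ![-(eps N) / 2, -(eps N * Real.sqrt 3) / 2],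
    ![eps N / 2, -(eps N * Real.sqrt 3) / 2]]

/-- lattice coordinates: a point `p = (i,j) ∈ ℤ²` represents `i a₁ + j a₂ ∈ 𝕃`. -/
def pt (N : ℕ) (p : ℤ × ℤ) : Fin 2 → ℝ :=
  (p.1 : ℝ) • avec N 0 + (p.2 : ℝ) • avec N 1

/-- index offsets corresponding to the directions `a₁,…,a₆`. -/
def oa : Fin 6 → ℤ × ℤ := ![(1, 0), (0, 1), (-1, 1), (-1, 0), (0, -1), (1, -1)]

/-- index offsets corresponding to the second-neighbour directions
`b₁ = a₁+a₂`, `b₂ = a₂+a₃`, `b₃ = a₃+a₄ = a₃−a₁`. -/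
def ob : Fin 3 → ℤ × ℤ := ![(1, 1), (-1, 2), (-2, 1)]

/-- the periodic index cell: both lattice coordinates in `{−N+1,…,N}`. -/
def cell2 (N : ℕ) : Finset (ℤ × ℤ) :=
  Finset.Icc (-(N : ℤ) + 1) N ×ˢ Finset.Icc (-(N : ℤ) + 1) N

/-- Ω-periodicity of a lattice function (in lattice coordinates). -/
def Per2 {α : Type*} (N : ℕ) (v : ℤ × ℤ → α) : Prop :=
  ∀ p : ℤ × ℤ, v (p.1 + 2 * N, p.2) = v p ∧ v (p.1, p.2 + 2 * N) = v p

/-- zero mean over the periodic cell. -/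
def MeanZero2 (N : ℕ) (u : ℤ × ℤ → Fin 2 → ℝ) : Prop :=
  ∑ p ∈ cell2 N, u p = 0

/-- finite-difference operator `D_r v(x) := (v(x+r) − v(x))/ε` in lattice coordinates;
`D_r D_s v = Dd r (Dd s v)`. -/
def Dd {α : Type*} [AddCommGroup α] [Module ℝ α] (N : ℕ) (d : ℤ × ℤ)
    (v : ℤ × ℤ → α) (p : ℤ × ℤ) : α :=
  (eps N)⁻¹ • (v (p + d) - v p)

/-- Euclidean inner product on ℝ². -/
def vdot (r s : Fin 2 → ℝ) : ℝ := r 0 * s 0 + r 1 * s 1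

/-- squared Euclidean norm on ℝ². -/
def vnormsq (r : Fin 2 → ℝ) : ℝ := vdot r r

/-- the matrix inner product `⟨r,s⟩_M := rᵀ M s`. -/
def mdot (M : Matrix (Fin 2) (Fin 2) ℝ) (r s : Fin 2 → ℝ) : ℝ := vdot r (M.mulVec s)

/-- the ℓ²_ε inner product `⟨u,w⟩ := ε² Σ_{x∈𝓛} u(x)·w(x)`. -/
def ip2 (N : ℕ) (u w : ℤ × ℤ → Fin 2 → ℝ) : ℝ :=
  eps N ^ 2 * ∑ p ∈ cell2 N, vdot (u p) (w p)

/-- `‖Du‖²_{ℓ²_ε} := ε² Σ_{x∈𝓛} Σ_{i=1}^{3} |D_{a_i}u(x)|²`. -/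
def gradnsq (N : ℕ) (u : ℤ × ℤ → Fin 2 → ℝ) : ℝ :=
  eps N ^ 2 * ∑ p ∈ cell2 N,
    (vnormsq (Dd N (oa 0) u p) + vnormsq (Dd N (oa 1) u p) + vnormsq (Dd N (oa 2) u p))

/-- the closed regular hexagon of "radius" r centered at the origin with sides
parallel to the lattice directions: convex hull of the six vertices
`r(cos(π/6 + kπ/3), sin(π/6 + kπ/3))`. -/
def Hex (r : ℝ) : Set (Fin 2 → ℝ) :=
  convexHull ℝ
    {v | ∃ k : Fin 6, v = r • ![Real.cos (Real.pi / 6 + (k : ℕ) * Real.pi / 3),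
                                Real.sin (Real.pi / 6 + (k : ℕ) * Real.pi / 3)]}

/-- the blending annulus `Ω_b := Hex(εR_b) \ Hex(εR_a)`. -/
def OmegaB (N : ℕ) (Ra Rb : ℕ) : Set (Fin 2 → ℝ) :=
  Hex (eps N * Rb) \ Hex (eps N * Ra)

/-- operator norm of a 2×2 matrix (as map on Euclidean ℝ²). -/
def opNorm (M : Matrix (Fin 2) (Fin 2) ℝ) : ℝ :=
  ‖Matrix.toEuclideanCLM (𝕜 := ℝ) M‖

/-- atomistic b₁-operator `(L^a_{b₁}v)(x) := −M·D_{b₁}D_{b₁}v(x−b₁)`. -/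
def Lab1 (N : ℕ) (M : Matrix (Fin 2) (Fin 2) ℝ) (v : ℤ × ℤ → Fin 2 → ℝ)
    (p : ℤ × ℤ) : Fin 2 → ℝ :=
  -M.mulVec (Dd N (ob 0) (Dd N (ob 0) v) (p - ob 0))

/-- continuum b₁-operator
`(L^c_{b₁}v)(x) := −M·[D_{a₁}D_{a₁}v(x−a₁) + D_{a₂}D_{a₂}v(x−a₂)
 + D_{a₁}D_{a₂}v(x−a₁) + D_{a₁}D_{a₂}v(x−a₂)]`. -/
def Lcb1 (N : ℕ) (M : Matrix (Fin 2) (Fin 2) ℝ) (v : ℤ × ℤ → Fin 2 → ℝ)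
    (p : ℤ × ℤ) : Fin 2 → ℝ :=
  -M.mulVec (Dd N (oa 0) (Dd N (oa 0) v) (p - oa 0)
      + Dd N (oa 1) (Dd N (oa 1) v) (p - oa 1)
      + Dd N (oa 0) (Dd N (oa 1) v) (p - oa 0)
      + Dd N (oa 0) (Dd N (oa 1) v) (p - oa 1))

/-- blended b₁-operator. -/
def Lbqcfb1 (N : ℕ) (M : Matrix (Fin 2) (Fin 2) ℝ) (β : ℤ × ℤ → ℝ)
    (v : ℤ × ℤ → Fin 2 → ℝ) (p : ℤ × ℤ) : Fin 2 → ℝ :=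
  β p • Lab1 N M v p + (1 - β p) • Lcb1 N M v p

/-- the error term `R_{b₁}`. -/
def Rb1 (N : ℕ) (M : Matrix (Fin 2) (Fin 2) ℝ) (β : ℤ × ℤ → ℝ)
    (u : ℤ × ℤ → Fin 2 → ℝ) : ℝ :=
  -(eps N ^ 4) * ∑ p ∈ cell2 N,
    (Dd N (oa 0) β (p - oa 0 - oa 0)
        * mdot M (Dd N (oa 0) u (p - oa 0 - oa 0))
            (Dd N (oa 1) (Dd N (oa 1) u) (p - oa 0 - oa 1))
      + Dd N (oa 1) β (p - oa 1)
          * mdot M (Dd N (oa 0) u (p - oa 0))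
              (Dd N (oa 0) (Dd N (oa 1) u) (p - oa 0 - oa 1)))

/-- the error term `S_{b₁}`. -/
def Sb1 (N : ℕ) (M : Matrix (Fin 2) (Fin 2) ℝ) (β : ℤ × ℤ → ℝ)
    (u : ℤ × ℤ → Fin 2 → ℝ) : ℝ :=
  -(eps N ^ 4) * ∑ p ∈ cell2 N,
    Dd N (oa 0) (Dd N (oa 0) β) (p - oa 0 - oa 0)
      * mdot M (u (p - oa 0)) (Dd N (oa 1) (Dd N (oa 1) u) (p - oa 0 - oa 1))


/-- auxiliary: shift a periodic 1D sum by one. -/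
lemma shift1_aux (N : ℕ) (hN : 1 ≤ N) (g : ℤ → ℝ) (hg : ∀ i, g (i + 2*N) = g i) :
    ∑ i ∈ Finset.Icc (-(N:ℤ)+1) N, g (i+1) = ∑ i ∈ Finset.Icc (-(N:ℤ)+1) N, g i := by
  have hN' : (1:ℤ) ≤ (N:ℤ) := by exact_mod_cast hN
  have h1 : ∑ i ∈ Finset.Icc (-(N:ℤ)+1) N, g (i+1)
      = ∑ i ∈ Finset.Icc (-(N:ℤ)+2) ((N:ℤ)+1), g i := by
    rw [show Finset.Icc (-(N:ℤ)+2) ((N:ℤ)+1)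
        = (Finset.Icc (-(N:ℤ)+1) (N:ℤ)).map (addRightEmbedding 1) by
      rw [Finset.map_add_right_Icc]; congr 1; ring]
    rw [Finset.sum_map]
    simp [addRightEmbedding_apply]
  have h2 : Finset.Icc (-(N:ℤ)+2) ((N:ℤ)+1) = insert ((N:ℤ)+1) (Finset.Icc (-(N:ℤ)+2) (N:ℤ)) := by
    ext i; simp only [Finset.mem_Icc, Finset.mem_insert]; omega
  have h3 : Finset.Icc (-(N:ℤ)+1) (N:ℤ) = insert (-(N:ℤ)+1) (Finset.Icc (-(N:ℤ)+2) (N:ℤ)) := by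
    ext i; simp only [Finset.mem_Icc, Finset.mem_insert]; omega
  have h4 : ((N:ℤ)+1) ∉ Finset.Icc (-(N:ℤ)+2) (N:ℤ) := by simp
  have h5 : (-(N:ℤ)+1) ∉ Finset.Icc (-(N:ℤ)+2) (N:ℤ) := by simp
  rw [h1, h2, Finset.sum_insert h4, h3, Finset.sum_insert h5]
  have : g ((N:ℤ)+1) = g (-(N:ℤ)+1) := by
    have := hg (-(N:ℤ)+1); rw [show -(N:ℤ)+1+2*N = (N:ℤ)+1 by ring] at this; exact this
  rw [this]

/-- auxiliary: shift a periodic 1D sum by an arbitrary integer. -/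
lemma shiftk_aux (N : ℕ) (hN : 1 ≤ N) (k : ℤ) :
    ∀ g : ℤ → ℝ, (∀ i, g (i + 2*N) = g i) →
    ∑ i ∈ Finset.Icc (-(N:ℤ)+1) N, g (i+k) = ∑ i ∈ Finset.Icc (-(N:ℤ)+1) N, g i := by
  induction k using Int.induction_on with
  | zero => intro g hg; simp
  | succ k ih =>
      intro g hg
      have hg' : ∀ i, (fun j => g (j+1)) (i + 2*N) = (fun j => g (j+1)) i := by
        intro i; simp only
        rw [show i + 2*(N:ℤ) + 1 = (i+1) + 2*N by ring, hg]
      have e1 : ∑ i ∈ Finset.Icc (-(N:ℤ)+1) N, g (i+(k+1))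
          = ∑ i ∈ Finset.Icc (-(N:ℤ)+1) N, (fun j => g (j+1)) (i+k) := by
        apply Finset.sum_congr rfl; intro i _; simp only; rw [show i+((k:ℤ)+1) = i+k+1 by ring]
      rw [e1, ih (fun j => g (j+1)) hg']
      exact shift1_aux N hN g hg
  | pred k ih =>
      intro g hg
      have hg' : ∀ i, (fun j => g (j-1)) (i + 2*N) = (fun j => g (j-1)) i := by
        intro i; simp only
        rw [show i + 2*(N:ℤ) - 1 = (i-1) + 2*N by ring, hg]
      have e1 : ∑ i ∈ Finset.Icc (-(N:ℤ)+1) N, g (i+(-(k:ℤ)-1))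
          = ∑ i ∈ Finset.Icc (-(N:ℤ)+1) N, (fun j => g (j-1)) (i+(-(k:ℤ))) := by
        apply Finset.sum_congr rfl; intro i _; simp only; rw [show i+(-(k:ℤ)-1) = i+(-(k:ℤ))-1 by ring]
      have e2 := ih (fun j => g (j-1)) hg'
      have e3 := shift1_aux N hN (fun j => g (j-1)) hg'
      simp only [add_sub_cancel_right] at e3
      calc ∑ i ∈ Finset.Icc (-(N:ℤ)+1) N, g (i+(-(k:ℤ)-1))
          = ∑ i ∈ Finset.Icc (-(N:ℤ)+1) N, (fun j => g (j-1)) (i+(-(k:ℤ))) := e1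
        _ = ∑ i ∈ Finset.Icc (-(N:ℤ)+1) N, (fun j => g (j-1)) i := e2
        _ = ∑ i ∈ Finset.Icc (-(N:ℤ)+1) N, g i := e3.symm

/-- auxiliary: a sum of an Ω-periodic function over the cell is shift invariant. -/
lemma cell2_shift_aux (N : ℕ) (hN : 1 ≤ N) (f : ℤ×ℤ → ℝ) (hf : Per2 N f) (d : ℤ×ℤ) :
    ∑ p ∈ cell2 N, f (p+d) = ∑ p ∈ cell2 N, f p := by
  rw [cell2, Finset.sum_product, Finset.sum_product]
  have inner : ∀ x : ℤ, ∑ y ∈ Finset.Icc (-(N:ℤ)+1) N, f (x + d.1, y + d.2)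
      = ∑ y ∈ Finset.Icc (-(N:ℤ)+1) N, f (x + d.1, y) :=
    fun x => shiftk_aux N hN d.2 (fun y => f (x + d.1, y)) (fun y => (hf (x + d.1, y)).2)
  have houter := shiftk_aux N hN d.1 (fun z => ∑ y ∈ Finset.Icc (-(N:ℤ)+1) N, f (z, y))
    (fun x => Finset.sum_congr rfl (fun y _ => (hf (x,y)).1))
  calc ∑ x ∈ Finset.Icc (-(N:ℤ)+1) N, ∑ y ∈ Finset.Icc (-(N:ℤ)+1) N, f ((x,y)+d)
      = ∑ x ∈ Finset.Icc (-(N:ℤ)+1) N, ∑ y ∈ Finset.Icc (-(N:ℤ)+1) N, f (x+d.1, y+d.2) := rfl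
    _ = ∑ x ∈ Finset.Icc (-(N:ℤ)+1) N, ∑ y ∈ Finset.Icc (-(N:ℤ)+1) N, f (x+d.1, y) :=
        Finset.sum_congr rfl (fun x _ => inner x)
    _ = ∑ x ∈ Finset.Icc (-(N:ℤ)+1) N, ∑ y ∈ Finset.Icc (-(N:ℤ)+1) N, f (x, y) := houter

/-- auxiliary monomial used in the telescoping argument. -/
def gm (M : Matrix (Fin 2) (Fin 2) ℝ) (β : ℤ×ℤ → ℝ) (u : ℤ×ℤ → Fin 2 → ℝ)
    (k0 k1 : ℤ×ℤ) (q : ℤ×ℤ) : ℝ :=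
  β (q + k0) * mdot M (u q) (u (q + k1))

lemma gm_per (N : ℕ) (M : Matrix (Fin 2) (Fin 2) ℝ) (β : ℤ×ℤ → ℝ) (u : ℤ×ℤ → Fin 2 → ℝ)
    (hβ : Per2 N β) (hu : Per2 N u) (k0 k1 : ℤ×ℤ) : Per2 N (gm M β u k0 k1) := by
  intro p
  have h1 : ∀ d : ℤ×ℤ, ((p.1 + 2*(N:ℤ), p.2) + d) = ((p+d).1 + 2*(N:ℤ), (p+d).2) := by
    intro d; apply Prod.ext <;> simp only [Prod.fst_add, Prod.snd_add] <;> ring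
  have h2 : ∀ d : ℤ×ℤ, ((p.1, p.2 + 2*(N:ℤ)) + d) = ((p+d).1, (p+d).2 + 2*(N:ℤ)) := by
    intro d; apply Prod.ext <;> simp only [Prod.fst_add, Prod.snd_add] <;> ring
  constructor
  · show β ((p.1 + 2*(N:ℤ), p.2) + k0) * mdot M (u (p.1 + 2*(N:ℤ), p.2)) (u ((p.1 + 2*(N:ℤ), p.2) + k1)) = _
    rw [h1 k0, h1 k1]
    rw [show ((p+k0).1 + 2*(N:ℤ), (p+k0).2) = (((p+k0) : ℤ×ℤ).1 + 2*(N:ℤ), ((p+k0) : ℤ×ℤ).2) from rfl]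
    rw [(hβ (p+k0)).1, (hu p).1, (hu (p+k1)).1]
    rfl
  · show β ((p.1, p.2 + 2*(N:ℤ)) + k0) * mdot M (u (p.1, p.2 + 2*(N:ℤ))) (u ((p.1, p.2 + 2*(N:ℤ)) + k1)) = _
    rw [h2 k0, h2 k1]
    rw [(hβ (p+k0)).2, (hu p).2, (hu (p+k1)).2]
    rfl

set_option maxHeartbeats 2000000 in
set_option maxRecDepth 100000 in
/-- divergence form of the quadratic form of `L^{bqcf}_{b₁}`. -/
theorem stmt_14 (N : ℕ) (hN : 1 ≤ N) (M : Matrix (Fin 2) (Fin 2) ℝ)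
    (hM : M.IsSymm) (β : ℤ × ℤ → ℝ) (hβper : Per2 N β)
    (u : ℤ × ℤ → Fin 2 → ℝ) (huper : Per2 N u) (humean : MeanZero2 N u) :
    ip2 N (Lbqcfb1 N M β u) u
      = ip2 N (Lcb1 N M u) u
          - eps N ^ 4 * ∑ p ∈ cell2 N,
              β (p - oa 1)
                * mdot M (Dd N (oa 0) (Dd N (oa 1) u) (p - oa 0 - oa 1))
                    (Dd N (oa 0) (Dd N (oa 1) u) (p - oa 0 - oa 1))
          + Rb1 N M β u + Sb1 N M β u := by
  have hNZ : ((N:ℝ)) ≠ 0 := Nat.cast_ne_zero.mpr (by omega)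
  have hE : eps N ≠ 0 := by simp [eps, hNZ]
  have hM' : M 1 0 = M 0 1 := hM.apply 0 1
  have tz : ∀ (c : ℝ) (k0 k1 s : ℤ×ℤ),
      ∑ p ∈ cell2 N, c * (gm M β u k0 k1 (p + s) - gm M β u k0 k1 p) = 0 := by
    intro c k0 k1 s
    rw [← Finset.mul_sum, Finset.sum_sub_distrib,
      cell2_shift_aux N hN _ (gm_per N M β u hβper huper k0 k1) s, sub_self, mul_zero]
  have htele : ∑ p ∈ cell2 N,
      ((1 : ℝ) * (gm M β u ((0 : ℤ), (0 : ℤ)) ((1 : ℤ), (1 : ℤ)) (p + ((-2 : ℤ), (0 : ℤ))) - gm M β u ((0 : ℤ), (0 : ℤ)) ((1 : ℤ), (1 : ℤ)) p)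
        + (1 : ℝ) * (gm M β u ((0 : ℤ), (0 : ℤ)) ((0 : ℤ), (0 : ℤ)) (p + ((0 : ℤ), (-1 : ℤ))) - gm M β u ((0 : ℤ), (0 : ℤ)) ((0 : ℤ), (0 : ℤ)) p)
        + (2 : ℝ) * (gm M β u ((0 : ℤ), (0 : ℤ)) ((0 : ℤ), (0 : ℤ)) (p + ((-1 : ℤ), (0 : ℤ))) - gm M β u ((0 : ℤ), (0 : ℤ)) ((0 : ℤ), (0 : ℤ)) p)
        + (-2 : ℝ) * (gm M β u ((0 : ℤ), (0 : ℤ)) ((1 : ℤ), (0 : ℤ)) (p + ((-2 : ℤ), (0 : ℤ))) - gm M β u ((0 : ℤ), (0 : ℤ)) ((1 : ℤ), (0 : ℤ)) p)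
        + (-1 : ℝ) * (gm M β u ((0 : ℤ), (0 : ℤ)) ((0 : ℤ), (1 : ℤ)) (p + ((0 : ℤ), (-1 : ℤ))) - gm M β u ((0 : ℤ), (0 : ℤ)) ((0 : ℤ), (1 : ℤ)) p)
        + (-1 : ℝ) * (gm M β u ((0 : ℤ), (0 : ℤ)) ((0 : ℤ), (1 : ℤ)) (p + ((-1 : ℤ), (0 : ℤ))) - gm M β u ((0 : ℤ), (0 : ℤ)) ((0 : ℤ), (1 : ℤ)) p)
        + (1 : ℝ) * (gm M β u ((0 : ℤ), (1 : ℤ)) ((0 : ℤ), (1 : ℤ)) (p + ((0 : ℤ), (-1 : ℤ))) - gm M β u ((0 : ℤ), (1 : ℤ)) ((0 : ℤ), (1 : ℤ)) p)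
        + (-1 : ℝ) * (gm M β u ((0 : ℤ), (1 : ℤ)) ((0 : ℤ), (1 : ℤ)) (p + ((-1 : ℤ), (-1 : ℤ))) - gm M β u ((0 : ℤ), (1 : ℤ)) ((0 : ℤ), (1 : ℤ)) p)
        + (-1 : ℝ) * (gm M β u ((1 : ℤ), (-1 : ℤ)) ((1 : ℤ), (-1 : ℤ)) (p + ((-1 : ℤ), (1 : ℤ))) - gm M β u ((1 : ℤ), (-1 : ℤ)) ((1 : ℤ), (-1 : ℤ)) p)
        + (1 : ℝ) * (gm M β u ((1 : ℤ), (-1 : ℤ)) ((1 : ℤ), (-1 : ℤ)) (p + ((-1 : ℤ), (0 : ℤ))) - gm M β u ((1 : ℤ), (-1 : ℤ)) ((1 : ℤ), (-1 : ℤ)) p)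
        + (1 : ℝ) * (gm M β u ((0 : ℤ), (0 : ℤ)) ((1 : ℤ), (-1 : ℤ)) (p + ((-2 : ℤ), (0 : ℤ))) - gm M β u ((0 : ℤ), (0 : ℤ)) ((1 : ℤ), (-1 : ℤ)) p)
        + (1 : ℝ) * (gm M β u ((1 : ℤ), (0 : ℤ)) ((1 : ℤ), (1 : ℤ)) (p + ((-1 : ℤ), (-1 : ℤ))) - gm M β u ((1 : ℤ), (0 : ℤ)) ((1 : ℤ), (1 : ℤ)) p)
        + (-1 : ℝ) * (gm M β u ((1 : ℤ), (0 : ℤ)) ((1 : ℤ), (1 : ℤ)) (p + ((-2 : ℤ), (0 : ℤ))) - gm M β u ((1 : ℤ), (0 : ℤ)) ((1 : ℤ), (1 : ℤ)) p)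
        + (-2 : ℝ) * (gm M β u ((1 : ℤ), (0 : ℤ)) ((1 : ℤ), (0 : ℤ)) (p + ((-1 : ℤ), (-1 : ℤ))) - gm M β u ((1 : ℤ), (0 : ℤ)) ((1 : ℤ), (0 : ℤ)) p)
        + (2 : ℝ) * (gm M β u ((1 : ℤ), (0 : ℤ)) ((1 : ℤ), (0 : ℤ)) (p + ((-2 : ℤ), (0 : ℤ))) - gm M β u ((1 : ℤ), (0 : ℤ)) ((1 : ℤ), (0 : ℤ)) p)
        + (-1 : ℝ) * (gm M β u ((1 : ℤ), (0 : ℤ)) ((0 : ℤ), (1 : ℤ)) (p + ((-1 : ℤ), (-1 : ℤ))) - gm M β u ((1 : ℤ), (0 : ℤ)) ((0 : ℤ), (1 : ℤ)) p)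
        + (1 : ℝ) * (gm M β u ((1 : ℤ), (0 : ℤ)) ((0 : ℤ), (1 : ℤ)) (p + ((-1 : ℤ), (0 : ℤ))) - gm M β u ((1 : ℤ), (0 : ℤ)) ((0 : ℤ), (1 : ℤ)) p)
        + (1 : ℝ) * (gm M β u ((1 : ℤ), (0 : ℤ)) ((0 : ℤ), (0 : ℤ)) (p + ((-1 : ℤ), (-1 : ℤ))) - gm M β u ((1 : ℤ), (0 : ℤ)) ((0 : ℤ), (0 : ℤ)) p)
        + (-1 : ℝ) * (gm M β u ((1 : ℤ), (0 : ℤ)) ((0 : ℤ), (0 : ℤ)) (p + ((-1 : ℤ), (0 : ℤ))) - gm M β u ((1 : ℤ), (0 : ℤ)) ((0 : ℤ), (0 : ℤ)) p)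
        + (-1 : ℝ) * (gm M β u ((1 : ℤ), (0 : ℤ)) ((1 : ℤ), (-1 : ℤ)) (p + ((-2 : ℤ), (0 : ℤ))) - gm M β u ((1 : ℤ), (0 : ℤ)) ((1 : ℤ), (-1 : ℤ)) p)
        + (1 : ℝ) * (gm M β u ((1 : ℤ), (0 : ℤ)) ((1 : ℤ), (-1 : ℤ)) (p + ((-1 : ℤ), (0 : ℤ))) - gm M β u ((1 : ℤ), (0 : ℤ)) ((1 : ℤ), (-1 : ℤ)) p)) = 0 := by
    simp only [Finset.sum_add_distrib]
    simp only [tz, add_zero]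
  rw [← sub_eq_zero]
  rw [ip2, ip2, Rb1, Sb1]
  simp only [Finset.mul_sum]
  simp only [← Finset.sum_sub_distrib, ← Finset.sum_add_distrib]
  rw [← htele]
  apply Finset.sum_congr rfl
  intro p _
  obtain ⟨x, y⟩ := p
  simp only [gm, Lbqcfb1, Lab1, Lcb1, Dd, mdot, vdot, oa, ob, Matrix.cons_val_zero,
    Matrix.cons_val_one, Matrix.head_cons, Matrix.mulVec, dotProduct, Fin.sum_univ_two,
    Pi.add_apply, Pi.sub_apply, Pi.neg_apply, Pi.smul_apply, smul_eq_mul,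
    Prod.mk_add_mk, Prod.mk_sub_mk, hM']
  field_simp
  ring
end
end

section
/- Let N ≥ 1 be an integer, ε := 1/N, and let Q₁, Q₂, Q₃ be symmetric real 2×2 matrices and M₁, M₂, M₃ symmetric real 2×2 matrices defining L^c. Let β : 𝕃 → [0,1] be Ω-periodic. Suppose there are γ_c ∈ ℝ and δ ≥ 0 such that ⟨L^c u, u⟩ ≥ γ_c ‖Du‖²_{ℓ²_ε} for all u ∈ U, and rᵀQ_j r ≤ δ|r|² for all r ∈ ℝ² and j = 1,2,3. Then for all u ∈ U: ⟨L̃ u, u⟩ ≥ (γ_c − 4δ) ‖Du‖²_{ℓ²_ε}. In particular, if δ < γ_c/4 then L̃ is positive definite. -/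
open Finset

noncomputable section

attribute [local instance] Classical.propDecidable

/-- `‖Dβ‖_{ℓ∞} := max_i sup_x |D_{a_i}β(x)|`. -/
def DbSup (N : ℕ) (β : ℤ × ℤ → ℝ) : ℝ :=
  ⨆ (i : Fin 6) (p : ℤ × ℤ), |Dd N (oa i) β p|

/-- `‖D²β‖_{ℓ∞}` over all pairs of directions from `{a₁,…,a₆}`. -/
def D2bSup (N : ℕ) (β : ℤ × ℤ → ℝ) : ℝ :=
  ⨆ (i : Fin 6) (j : Fin 6) (p : ℤ × ℤ), |Dd N (oa i) (Dd N (oa j) β) p|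

/-- `‖D³β‖_{ℓ∞}` over all triples of directions from `{a₁,…,a₆}`. -/
def D3bSup (N : ℕ) (β : ℤ × ℤ → ℝ) : ℝ :=
  ⨆ (i : Fin 6) (j : Fin 6) (k : Fin 6) (p : ℤ × ℤ),
    |Dd N (oa i) (Dd N (oa j) (Dd N (oa k) β)) p|

/-- the Poincaré constant `C_P^{a,b} := ((εK)(εR_b)|log(εR_b)|)^{1/2}`. -/
def CP (N : ℕ) (Ra Rb : ℕ) : ℝ :=
  Real.sqrt ((eps N * ((Rb : ℝ) - Ra)) * (eps N * Rb) * |Real.log (eps N * Rb)|)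

/-- for `j = 1,2,3`, the offset of the direction `a_j`. -/
def oaJ (j : Fin 3) : ℤ × ℤ := oa (Fin.castLE (by norm_num) j)

/-- for `j = 1,2,3`, the offset of the direction `a_{j+1}`. -/
def oaJ1 (j : Fin 3) : ℤ × ℤ := oa (Fin.castLE (by norm_num) j.succ)

/-- linearized atomistic operator
`(L^a v)(x) := −Σ_i M_i D_{a_i}D_{a_i}v(x−a_i) − Σ_j Q_j D_{b_j}D_{b_j}v(x−b_j)`. -/
def La2 (N : ℕ) (M Q : Fin 3 → Matrix (Fin 2) (Fin 2) ℝ)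
    (v : ℤ × ℤ → Fin 2 → ℝ) (p : ℤ × ℤ) : Fin 2 → ℝ :=
  (-∑ i : Fin 3, (M i).mulVec (Dd N (oaJ i) (Dd N (oaJ i) v) (p - oaJ i)))
    - ∑ j : Fin 3, (Q j).mulVec (Dd N (ob j) (Dd N (ob j) v) (p - ob j))

/-- linearized local continuum (QCL) operator: same nearest-neighbour part, and
each second-neighbour term replaced by its Cauchy–Born expansion. -/
def Lc2 (N : ℕ) (M Q : Fin 3 → Matrix (Fin 2) (Fin 2) ℝ)
    (v : ℤ × ℤ → Fin 2 → ℝ) (p : ℤ × ℤ) : Fin 2 → ℝ :=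
  (-∑ i : Fin 3, (M i).mulVec (Dd N (oaJ i) (Dd N (oaJ i) v) (p - oaJ i)))
    - ∑ j : Fin 3, (Q j).mulVec
        (Dd N (oaJ j) (Dd N (oaJ j) v) (p - oaJ j)
          + Dd N (oaJ1 j) (Dd N (oaJ1 j) v) (p - oaJ1 j)
          + Dd N (oaJ j) (Dd N (oaJ1 j) v) (p - oaJ j)
          + Dd N (oaJ j) (Dd N (oaJ1 j) v) (p - oaJ1 j))

/-- the B-QCF operator `(L^{bqcf}v)(x) := β(x)(L^a v)(x) + (1−β(x))(L^c v)(x)`. -/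
def Lbqcf2 (N : ℕ) (M Q : Fin 3 → Matrix (Fin 2) (Fin 2) ℝ) (β : ℤ × ℤ → ℝ)
    (v : ℤ × ℤ → Fin 2 → ℝ) (p : ℤ × ℤ) : Fin 2 → ℝ :=
  β p • La2 N M Q v p + (1 - β p) • Lc2 N M Q v p

/-- the quadratic form of the auxiliary operator `L̃`:
`⟨L̃u,u⟩ := ⟨L^c u,u⟩ − ε⁴ Σ_j Σ_x β(x−a_{j+1}) |D_{a_j}D_{a_{j+1}}u(x−a_j−a_{j+1})|²_{Q_j}`. -/
def LtildeForm (N : ℕ) (M Q : Fin 3 → Matrix (Fin 2) (Fin 2) ℝ) (β : ℤ × ℤ → ℝ)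
    (u : ℤ × ℤ → Fin 2 → ℝ) : ℝ :=
  ip2 N (Lc2 N M Q u) u
    - eps N ^ 4 * ∑ j : Fin 3, ∑ p ∈ cell2 N,
        β (p - oaJ1 j)
          * mdot (Q j) (Dd N (oaJ j) (Dd N (oaJ1 j) u) (p - oaJ j - oaJ1 j))
              (Dd N (oaJ j) (Dd N (oaJ1 j) u) (p - oaJ j - oaJ1 j))

/-- `C'' := max_{j=1,2,3} |Q_j|` (operator norms). -/
def Cqq (Q : Fin 3 → Matrix (Fin 2) (Fin 2) ℝ) : ℝ :=
  max (max (opNorm (Q 0)) (opNorm (Q 1))) (opNorm (Q 2))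

lemma step1 (N : ℕ) (g : ℤ → ℝ) (hg : ∀ i, g (i + 2*N) = g i) :
    ∑ i ∈ Icc (-(N:ℤ)+1) N, g (i+1) = ∑ i ∈ Icc (-(N:ℤ)+1) N, g i := by
  have h0 : ∑ i ∈ Icc (-(N:ℤ)+1) N, g (i+1) = ∑ i ∈ Icc (-(N:ℤ)+1+1) ((N:ℤ)+1), g i := by
    rw [← Finset.map_add_right_Icc, Finset.sum_map]; simp [addRightEmbedding]
  have hB : Icc (-(N:ℤ)+1) ((N:ℤ)+1) = insert ((N:ℤ)+1) (Icc (-(N:ℤ)+1) (N:ℤ)) := by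
    ext x; simp [Finset.mem_Icc]; omega
  have hA : Icc (-(N:ℤ)+1+1) ((N:ℤ)+1) = (Icc (-(N:ℤ)+1) ((N:ℤ)+1)).erase (-(N:ℤ)+1) := by
    ext x; simp [Finset.mem_Icc]
  have hmem : (-(N:ℤ)+1) ∈ Icc (-(N:ℤ)+1) ((N:ℤ)+1) := by simp [Finset.mem_Icc]
  have hnot : ((N:ℤ)+1) ∉ Icc (-(N:ℤ)+1) (N:ℤ) := by simp [Finset.mem_Icc]
  have hper : g ((N:ℤ)+1) = g (-(N:ℤ)+1) := by
    have := hg (-(N:ℤ)+1); rw [show (-(N:ℤ)+1+2*N) = (N:ℤ)+1 by ring] at this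
    exact this
  rw [h0, hA, Finset.sum_erase_eq_sub hmem, hB, Finset.sum_insert hnot]
  rw [hper]; ring

lemma shift1 (N : ℕ) (g : ℤ → ℝ) (hg : ∀ i, g (i + 2*N) = g i) (c : ℤ) :
    ∑ i ∈ Icc (-(N:ℤ)+1) N, g (i+c) = ∑ i ∈ Icc (-(N:ℤ)+1) N, g i := by
  induction c using Int.induction_on with
  | zero => simp
  | succ k ih =>
      have hs := step1 N (fun i => g (i + k)) (fun i => by
        rw [show i + 2*(N:ℤ) + k = (i + k) + 2*N by ring]; exact hg _)
      calc ∑ i ∈ Icc (-(N:ℤ)+1) N, g (i + ((k:ℤ)+1))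
          = ∑ i ∈ Icc (-(N:ℤ)+1) N, g ((i+1) + k) := by
            apply Finset.sum_congr rfl; intro i _; congr 1; ring
        _ = ∑ i ∈ Icc (-(N:ℤ)+1) N, g (i + k) := hs
        _ = _ := ih
  | pred k ih =>
      have hs := step1 N (fun i => g (i + (-(k:ℤ) - 1))) (fun i => by
        rw [show i + 2*(N:ℤ) + (-(k:ℤ)-1) = (i + (-(k:ℤ)-1)) + 2*N by ring]; exact hg _)
      calc ∑ i ∈ Icc (-(N:ℤ)+1) N, g (i + (-(k:ℤ)-1))
          = ∑ i ∈ Icc (-(N:ℤ)+1) N, g ((i+1) + (-(k:ℤ)-1)) := hs.symm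
        _ = ∑ i ∈ Icc (-(N:ℤ)+1) N, g (i + (-(k:ℤ))) := by
            apply Finset.sum_congr rfl; intro i _; congr 1; ring
        _ = _ := ih

lemma sum_shift2 (N : ℕ) (f : ℤ × ℤ → ℝ) (hf : Per2 N f) (c : ℤ × ℤ) :
    ∑ p ∈ cell2 N, f (p + c) = ∑ p ∈ cell2 N, f p := by
  unfold cell2
  rw [Finset.sum_product, Finset.sum_product]
  have h1 : ∀ i : ℤ, ∑ j ∈ Icc (-(N:ℤ)+1) N, f ((i, j) + c)
      = ∑ j ∈ Icc (-(N:ℤ)+1) N, f (i + c.1, j) := by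
    intro i
    have := shift1 N (fun j => f (i + c.1, j)) (fun j => (hf (i + c.1, j)).2) c.2
    exact this
  calc ∑ i ∈ Icc (-(N:ℤ)+1) N, ∑ j ∈ Icc (-(N:ℤ)+1) N, f ((i, j) + c)
      = ∑ i ∈ Icc (-(N:ℤ)+1) N, ∑ j ∈ Icc (-(N:ℤ)+1) N, f (i + c.1, j) := by
        exact Finset.sum_congr rfl fun i _ => h1 i
    _ = ∑ i ∈ Icc (-(N:ℤ)+1) N, ∑ j ∈ Icc (-(N:ℤ)+1) N, f (i, j) := by
        exact shift1 N (fun i => ∑ j ∈ Icc (-(N:ℤ)+1) N, f (i, j))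
          (fun i => Finset.sum_congr rfl fun j _ => (hf (i, j)).1) c.1

lemma Per2_Dd {α : Type*} [AddCommGroup α] [Module ℝ α] (N : ℕ) (d : ℤ × ℤ)
    (v : ℤ × ℤ → α) (hv : Per2 N v) : Per2 N (Dd N d v) := by
  intro p
  constructor
  · unfold Dd
    rw [show ((p.1 + 2*(N:ℤ), p.2) : ℤ×ℤ) + d = ((p+d).1 + 2*N, (p+d).2) by
      simp [Prod.ext_iff]; ring]
    rw [(hv (p+d)).1, (hv p).1]
  · unfold Dd
    rw [show ((p.1, p.2 + 2*(N:ℤ)) : ℤ×ℤ) + d = ((p+d).1, (p+d).2 + 2*N) by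
      simp [Prod.ext_iff]; ring]
    rw [(hv (p+d)).2, (hv p).2]

lemma Per2_comp {α β : Type*} (N : ℕ) (g : α → β) (v : ℤ × ℤ → α) (hv : Per2 N v) :
    Per2 N (fun p => g (v p)) := by
  intro p; exact ⟨congrArg g (hv p).1, congrArg g (hv p).2⟩

lemma vnormsq_nonneg (r : Fin 2 → ℝ) : 0 ≤ vnormsq r := by
  unfold vnormsq vdot; nlinarith [sq_nonneg (r 0), sq_nonneg (r 1)]

lemma vnormsq_neg (r : Fin 2 → ℝ) : vnormsq (-r) = vnormsq r := by
  unfold vnormsq vdot; simp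

lemma vnormsq_smul (c : ℝ) (r : Fin 2 → ℝ) : vnormsq (c • r) = c^2 * vnormsq r := by
  unfold vnormsq vdot; simp; ring

lemma vnormsq_sub_le (x y : Fin 2 → ℝ) :
    vnormsq (x - y) ≤ 2 * vnormsq x + 2 * vnormsq y := by
  unfold vnormsq vdot; simp only [Pi.sub_apply]; nlinarith [sq_nonneg (x 0 + y 0), sq_nonneg (x 1 + y 1)]

/-- Sum of `|Dd|²` over the cell is bounded using periodicity. -/
lemma sum_Dd_sq_le (N : ℕ) (d : ℤ × ℤ) (w : ℤ × ℤ → Fin 2 → ℝ) (hw : Per2 N w) :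
    ∑ p ∈ cell2 N, vnormsq (Dd N d w p)
      ≤ 4 * ((eps N)⁻¹)^2 * ∑ p ∈ cell2 N, vnormsq (w p) := by
  have hpt : ∀ p, vnormsq (Dd N d w p)
      ≤ ((eps N)⁻¹)^2 * (2 * vnormsq (w (p + d)) + 2 * vnormsq (w p)) := by
    intro p
    unfold Dd
    rw [vnormsq_smul]
    have := vnormsq_sub_le (w (p+d)) (w p)
    have h2 : (0:ℝ) ≤ ((eps N)⁻¹)^2 := sq_nonneg _
    nlinarith
  calc ∑ p ∈ cell2 N, vnormsq (Dd N d w p)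
      ≤ ∑ p ∈ cell2 N, ((eps N)⁻¹)^2 * (2 * vnormsq (w (p + d)) + 2 * vnormsq (w p)) :=
        Finset.sum_le_sum fun p _ => hpt p
    _ = ((eps N)⁻¹)^2 * (2 * ∑ p ∈ cell2 N, vnormsq (w (p + d))
          + 2 * ∑ p ∈ cell2 N, vnormsq (w p)) := by
        simp only [Finset.mul_sum, ← Finset.sum_add_distrib]
    _ = 4 * ((eps N)⁻¹)^2 * ∑ p ∈ cell2 N, vnormsq (w p) := by
        rw [sum_shift2 N (fun p => vnormsq (w p)) (Per2_comp N vnormsq w hw) d]; ring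

/-- stability of the auxiliary operator `L̃`: if `L^c` is coercive
with constant `γ_c` and `rᵀQ_j r ≤ δ|r|²`, then `⟨L̃u,u⟩ ≥ (γ_c − 4δ)‖Du‖²`. -/
theorem stmt_17 (N : ℕ) (hN : 1 ≤ N)
    (M Q : Fin 3 → Matrix (Fin 2) (Fin 2) ℝ)
    (hMsym : ∀ i, (M i).IsSymm) (hQsym : ∀ j, (Q j).IsSymm)
    (β : ℤ × ℤ → ℝ) (hβper : Per2 N β)
    (hβrange : ∀ p : ℤ × ℤ, β p ∈ Set.Icc (0 : ℝ) 1)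
    (γc δ : ℝ) (hδ : 0 ≤ δ)
    (hc : ∀ u : ℤ × ℤ → Fin 2 → ℝ, Per2 N u → MeanZero2 N u →
      ip2 N (Lc2 N M Q u) u ≥ γc * gradnsq N u)
    (hQ : ∀ j : Fin 3, ∀ r : Fin 2 → ℝ, mdot (Q j) r r ≤ δ * vnormsq r) :
    ∀ u : ℤ × ℤ → Fin 2 → ℝ, Per2 N u → MeanZero2 N u →
      LtildeForm N M Q β u ≥ (γc - 4 * δ) * gradnsq N u := by
  intro u hu hmu
  have hN0 : (0:ℝ) < (N:ℝ) := by exact_mod_cast Nat.lt_of_lt_of_le Nat.zero_lt_one hN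
  have hε : (0:ℝ) < eps N := by unfold eps; positivity
  have hεne : eps N ≠ 0 := ne_of_gt hε
  -- the three second-derivative sums
  have key : ∀ j : Fin 3,
      ∑ p ∈ cell2 N, β (p - oaJ1 j)
          * mdot (Q j) (Dd N (oaJ j) (Dd N (oaJ1 j) u) (p - oaJ j - oaJ1 j))
              (Dd N (oaJ j) (Dd N (oaJ1 j) u) (p - oaJ j - oaJ1 j))
        ≤ 4 * ((eps N)⁻¹)^2 * δ * ∑ p ∈ cell2 N, vnormsq (Dd N (oaJ1 j) u p) := by
    intro j
    have hwper : Per2 N (Dd N (oaJ1 j) u) := Per2_Dd N _ u hu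
    have hstep1 : ∑ p ∈ cell2 N, β (p - oaJ1 j)
          * mdot (Q j) (Dd N (oaJ j) (Dd N (oaJ1 j) u) (p - oaJ j - oaJ1 j))
              (Dd N (oaJ j) (Dd N (oaJ1 j) u) (p - oaJ j - oaJ1 j))
        ≤ δ * ∑ p ∈ cell2 N, vnormsq (Dd N (oaJ j) (Dd N (oaJ1 j) u) (p - oaJ j - oaJ1 j)) := by
      rw [Finset.mul_sum]
      apply Finset.sum_le_sum
      intro p _
      set r := Dd N (oaJ j) (Dd N (oaJ1 j) u) (p - oaJ j - oaJ1 j) with hr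
      have hm := hQ j r
      have hb := hβrange (p - oaJ1 j)
      have hv := vnormsq_nonneg r
      have h1 : β (p - oaJ1 j) * mdot (Q j) r r ≤ β (p - oaJ1 j) * (δ * vnormsq r) :=
        mul_le_mul_of_nonneg_left hm hb.1
      have h2 : (0:ℝ) ≤ (1 - β (p - oaJ1 j)) * (δ * vnormsq r) :=
        mul_nonneg (by linarith [hb.2]) (mul_nonneg hδ hv)
      nlinarith
    have hshift : ∑ p ∈ cell2 N, vnormsq (Dd N (oaJ j) (Dd N (oaJ1 j) u) (p - oaJ j - oaJ1 j))
        = ∑ p ∈ cell2 N, vnormsq (Dd N (oaJ j) (Dd N (oaJ1 j) u) p) := by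
      have hsh := sum_shift2 N (fun p => vnormsq (Dd N (oaJ j) (Dd N (oaJ1 j) u) p))
        (Per2_comp N vnormsq _ (Per2_Dd N _ _ hwper)) (-oaJ j - oaJ1 j)
      calc ∑ p ∈ cell2 N, vnormsq (Dd N (oaJ j) (Dd N (oaJ1 j) u) (p - oaJ j - oaJ1 j))
          = ∑ p ∈ cell2 N, vnormsq (Dd N (oaJ j) (Dd N (oaJ1 j) u) (p + (-oaJ j - oaJ1 j))) := by
            apply Finset.sum_congr rfl; intro p _
            rw [show p - oaJ j - oaJ1 j = p + (-oaJ j - oaJ1 j) by abel]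
        _ = _ := hsh
    have hbd := sum_Dd_sq_le N (oaJ j) (Dd N (oaJ1 j) u) hwper
    have hbd' : δ * ∑ p ∈ cell2 N, vnormsq (Dd N (oaJ j) (Dd N (oaJ1 j) u) p)
        ≤ δ * (4 * ((eps N)⁻¹)^2 * ∑ p ∈ cell2 N, vnormsq (Dd N (oaJ1 j) u p)) :=
      mul_le_mul_of_nonneg_left hbd hδ
    calc ∑ p ∈ cell2 N, β (p - oaJ1 j)
          * mdot (Q j) (Dd N (oaJ j) (Dd N (oaJ1 j) u) (p - oaJ j - oaJ1 j))
              (Dd N (oaJ j) (Dd N (oaJ1 j) u) (p - oaJ j - oaJ1 j))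
        ≤ δ * ∑ p ∈ cell2 N, vnormsq (Dd N (oaJ j) (Dd N (oaJ1 j) u) (p - oaJ j - oaJ1 j)) := hstep1
      _ = δ * ∑ p ∈ cell2 N, vnormsq (Dd N (oaJ j) (Dd N (oaJ1 j) u) p) := by rw [hshift]
      _ ≤ δ * (4 * ((eps N)⁻¹)^2 * ∑ p ∈ cell2 N, vnormsq (Dd N (oaJ1 j) u p)) := hbd'
      _ = 4 * ((eps N)⁻¹)^2 * δ * ∑ p ∈ cell2 N, vnormsq (Dd N (oaJ1 j) u p) := by ring
  -- identify the directions
  have h0 : oaJ1 0 = oa 1 := rfl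
  have h1 : oaJ1 1 = oa 2 := rfl
  have h2 : oaJ1 2 = oa 3 := rfl
  -- the a₄-sum equals the a₁-sum
  have hneg : ∑ p ∈ cell2 N, vnormsq (Dd N (oa 3) u p)
      = ∑ p ∈ cell2 N, vnormsq (Dd N (oa 0) u p) := by
    have hpw : ∀ p : ℤ × ℤ, Dd N (oa 3) u p = -(Dd N (oa 0) u (p + ((-1:ℤ), (0:ℤ)))) := by
      intro p
      unfold Dd
      have hoa3 : (oa 3 : ℤ × ℤ) = ((-1:ℤ), (0:ℤ)) := rfl
      have hoa0 : (oa 0 : ℤ × ℤ) = ((1:ℤ), (0:ℤ)) := rfl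
      rw [hoa3, hoa0]
      have hpp : p + ((-1:ℤ), (0:ℤ)) + ((1:ℤ), (0:ℤ)) = p := by
        simp [Prod.ext_iff]
      rw [hpp, ← smul_neg, neg_sub]
    calc ∑ p ∈ cell2 N, vnormsq (Dd N (oa 3) u p)
        = ∑ p ∈ cell2 N, vnormsq (Dd N (oa 0) u (p + ((-1:ℤ), (0:ℤ)))) := by
          apply Finset.sum_congr rfl; intro p _; rw [hpw p, vnormsq_neg]
      _ = ∑ p ∈ cell2 N, vnormsq (Dd N (oa 0) u p) :=
          sum_shift2 N (fun p => vnormsq (Dd N (oa 0) u p))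
            (Per2_comp N vnormsq _ (Per2_Dd N _ u hu)) _
  -- put the three bounds together
  set V0 := ∑ p ∈ cell2 N, vnormsq (Dd N (oa 0) u p) with hV0
  set V1 := ∑ p ∈ cell2 N, vnormsq (Dd N (oa 1) u p) with hV1
  set V2 := ∑ p ∈ cell2 N, vnormsq (Dd N (oa 2) u p) with hV2
  have hgrad : gradnsq N u = eps N ^ 2 * (V0 + V1 + V2) := by
    unfold gradnsq
    rw [hV0, hV1, hV2, ← Finset.sum_add_distrib, ← Finset.sum_add_distrib]
  have hsum : ∑ j : Fin 3, ∑ p ∈ cell2 N,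
        β (p - oaJ1 j)
          * mdot (Q j) (Dd N (oaJ j) (Dd N (oaJ1 j) u) (p - oaJ j - oaJ1 j))
              (Dd N (oaJ j) (Dd N (oaJ1 j) u) (p - oaJ j - oaJ1 j))
      ≤ 4 * ((eps N)⁻¹)^2 * δ * (V0 + V1 + V2) := by
    rw [Fin.sum_univ_three]
    have k0 := key 0
    have k1 := key 1
    have k2 := key 2
    rw [h0] at k0
    rw [h1] at k1
    rw [h2, hneg] at k2
    rw [h0, h1, h2]
    linarith
  have hX : eps N ^ 4 * ∑ j : Fin 3, ∑ p ∈ cell2 N,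
        β (p - oaJ1 j)
          * mdot (Q j) (Dd N (oaJ j) (Dd N (oaJ1 j) u) (p - oaJ j - oaJ1 j))
              (Dd N (oaJ j) (Dd N (oaJ1 j) u) (p - oaJ j - oaJ1 j))
      ≤ 4 * δ * gradnsq N u := by
    have he4 : (0:ℝ) ≤ eps N ^ 4 := by positivity
    have := mul_le_mul_of_nonneg_left hsum he4
    have hrw : eps N ^ 4 * (4 * ((eps N)⁻¹)^2 * δ * (V0 + V1 + V2))
        = 4 * δ * (eps N ^ 2 * (V0 + V1 + V2)) := by
      field_simp
    rw [hrw] at this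
    rw [hgrad]
    exact this
  have hcc := hc u hu hmu
  unfold LtildeForm
  have hr : (γc - 4 * δ) * gradnsq N u = γc * gradnsq N u - 4 * δ * gradnsq N u := by ring
  rw [ge_iff_le, hr]
  have := sub_le_sub hcc hX
  linarith
end
end
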